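/- arXiv:2405.01530 — 7 statements merged into one kernel-verified Lean document; each statement's English description precedes it below -/
import Mathlib

section
/- Let f : ℝ_{>0} → ℝ_{>0} be positive and locally integrable, and suppose ∫_1^x f(t)/t dt ≍ f(x) (i.e., there are constants 0 < A ≤ B with A f(x) ≤ ∫_1^x f(t)/t dt ≤ B f(x) for all large x). Then for every λ > 0 there are constants 0 < a_λ ≤ b_λ with a_λ f(x) ≤ f(λx) ≤ b_λ f(x) for all large x. -/
open MeasureTheory Filter
set_option maxHeartbeats 1000000 in

theorem aux_ge_one (f : ℝ → ℝ) (hpos : ∀ x : ℝ, 0 < x → 0 < f x)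
    (hloc : LocallyIntegrableOn f (Set.Ioi (0:ℝ)))
    (A B : ℝ) (hA : 0 < A) (hAB : A ≤ B)
    (hasymp : ∀ᶠ x in atTop, A * f x ≤ (∫ t in (1:ℝ)..x, f t / t) ∧
      (∫ t in (1:ℝ)..x, f t / t) ≤ B * f x) :
    ∀ lam : ℝ, 1 ≤ lam → ∃ a c : ℝ, 0 < a ∧ a ≤ c ∧
      ∀ᶠ x in atTop, a * f x ≤ f (lam * x) ∧ f (lam * x) ≤ c * f x := by
  intro lam hlam
  have hB : 0 < B := lt_of_lt_of_le hA hAB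
  set F : ℝ → ℝ := fun x => ∫ t in (1:ℝ)..x, f t / t with hF
  -- integrability
  have hii : ∀ a b : ℝ, 0 < a → a ≤ b → IntervalIntegrable (fun t => f t / t) volume a b := by
    intro a b ha hab
    have hsub : Set.Icc a b ⊆ Set.Ioi 0 := fun t ht => lt_of_lt_of_le ha ht.1
    have h1 : IntegrableOn f (Set.Icc a b) := hloc.integrableOn_compact_subset hsub isCompact_Icc
    have hm : AEStronglyMeasurable (fun t => f t / t) (volume.restrict (Set.Icc a b)) :=
      (h1.aemeasurable.div aemeasurable_id).aestronglyMeasurable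
    have h2 : IntegrableOn (fun t => f t / t) (Set.Icc a b) := by
      refine Integrable.mono' (g := fun t => f t / a) (h1.div_const a) hm ?_
      filter_upwards [ae_restrict_mem measurableSet_Icc] with t ht
      have ht0 : 0 < t := lt_of_lt_of_le ha ht.1
      have hf0 : 0 ≤ f t := (hpos t ht0).le
      rw [Real.norm_eq_abs, abs_of_nonneg (div_nonneg hf0 ht0.le)]
      gcongr
      exact ht.1
    rw [intervalIntegrable_iff]
    exact h2.mono_set (by rw [Set.uIoc_of_le hab]; exact Set.Ioc_subset_Icc_self)
  -- monotonicity of F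
  have hFmono : ∀ x y : ℝ, 1 ≤ x → x ≤ y → F x ≤ F y := by
    intro x y hx hxy
    have h1 := hii 1 x one_pos hx
    have h2 := hii x y (lt_of_lt_of_le one_pos hx) hxy
    have heq : F x + ∫ t in x..y, f t / t = F y :=
      intervalIntegral.integral_add_adjacent_intervals h1 h2
    have hnn : 0 ≤ ∫ t in x..y, f t / t := by
      apply intervalIntegral.integral_nonneg hxy
      intro u hu
      have hu0 : 0 < u := lt_of_lt_of_le (lt_of_lt_of_le one_pos hx) hu.1
      exact div_nonneg (hpos u hu0).le hu0.le
    linarith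
  obtain ⟨X0, hX0⟩ := eventually_atTop.mp hasymp
  set X : ℝ := max X0 1 with hXdef
  have hX1 : (1:ℝ) ≤ X := le_max_right _ _
  have hX : ∀ x : ℝ, X ≤ x → A * f x ≤ F x ∧ F x ≤ B * f x := fun x hx =>
    hX0 x (le_trans (le_max_left _ _) hx)
  set μ : ℝ := Real.exp (A/2) with hμdef
  have hμ1 : 1 < μ := by
    rw [hμdef]
    have : (0:ℝ) < A/2 := by linarith
    calc (1:ℝ) = Real.exp 0 := by simp
    _ < Real.exp (A/2) := Real.exp_lt_exp.mpr this
  -- key step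
  have hstep : ∀ x : ℝ, X ≤ x → F (μ * x) ≤ 2 * F x := by
    intro x hx
    have hx1 : 1 ≤ x := le_trans hX1 hx
    have hx0 : 0 < x := lt_of_lt_of_le one_pos hx1
    have hμx : x ≤ μ * x := le_mul_of_one_le_left hx0.le hμ1.le
    have hμx0 : 0 < μ * x := lt_of_lt_of_le hx0 hμx
    have heq : F x + (∫ t in x..μ*x, f t / t) = F (μ * x) :=
      intervalIntegral.integral_add_adjacent_intervals (hii 1 x one_pos hx1)
        (hii x (μ*x) hx0 hμx)
    have hFμx_pos : 0 < F (μ * x) := by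
      have := (hX (μ*x) (le_trans hx hμx)).1
      have := hpos (μ*x) hμx0
      nlinarith
    have hbound : (∫ t in x..μ*x, f t / t) ≤ ∫ t in x..μ*x, (F (μ*x)/A) * t⁻¹ := by
      apply intervalIntegral.integral_mono_on hμx (hii x (μ*x) hx0 hμx)
      · apply ContinuousOn.intervalIntegrable
        apply continuousOn_const.mul
        apply ContinuousOn.inv₀ continuousOn_id
        intro t ht
        rw [Set.uIcc_of_le hμx] at ht
        exact ne_of_gt (lt_of_lt_of_le hx0 ht.1)
      · intro t ht
        have ht0 : 0 < t := lt_of_lt_of_le hx0 ht.1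
        have h1 : A * f t ≤ F t := (hX t (le_trans hx ht.1)).1
        have h2 : F t ≤ F (μ*x) := hFmono t (μ*x) (le_trans hx1 ht.1) ht.2
        have h3 : f t ≤ F (μ*x)/A := by
          rw [le_div_iff₀ hA]; nlinarith
        rw [div_eq_mul_inv]
        exact mul_le_mul_of_nonneg_right h3 (inv_nonneg.mpr ht0.le)
    have hval : (∫ t in x..μ*x, (F (μ*x)/A) * t⁻¹) = (F (μ*x)/A) * (A/2) := by
      rw [intervalIntegral.integral_const_mul, integral_inv_of_pos hx0 hμx0]
      have : μ * x / x = μ := by field_simp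
      rw [this, hμdef, Real.log_exp]
    rw [hval] at hbound
    have : (F (μ*x)/A) * (A/2) = F (μ*x)/2 := by field_simp
    rw [this] at hbound
    linarith
  -- iterate
  have hiter : ∀ n : ℕ, ∀ x : ℝ, X ≤ x → F (μ^n * x) ≤ 2^n * F x := by
    intro n
    induction n with
    | zero => intro x hx; simp
    | succ n ih =>
      intro x hx
      have hx0 : 0 < x := lt_of_lt_of_le (lt_of_lt_of_le one_pos hX1) hx
      have hμn : (1:ℝ) ≤ μ^n := one_le_pow₀ hμ1.le
      have h1 : X ≤ μ^n * x := le_trans hx (le_mul_of_one_le_left hx0.le hμn)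
      have h2 : F (μ * (μ^n * x)) ≤ 2 * F (μ^n * x) := hstep _ h1
      have h3 : F (μ^n * x) ≤ 2^n * F x := ih x hx
      have heq : μ^(n+1) * x = μ * (μ^n * x) := by ring
      rw [heq]
      calc F (μ * (μ^n * x)) ≤ 2 * F (μ^n * x) := h2
        _ ≤ 2 * (2^n * F x) := by linarith
        _ = 2^(n+1) * F x := by ring
  -- choose n with lam ≤ μ^n
  obtain ⟨n, hn⟩ := pow_unbounded_of_one_lt lam hμ1
  refine ⟨A/B, 2^n * B / A, by positivity, ?_, ?_⟩
  · have h1 : A/B ≤ 1 := by rw [div_le_one hB]; exact hAB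
    have h2 : (1:ℝ) ≤ 2^n * B / A := by
      rw [le_div_iff₀ hA]
      have : (1:ℝ) ≤ 2^n := one_le_pow₀ one_le_two
      nlinarith
    linarith
  · filter_upwards [eventually_ge_atTop X] with x hx
    have hx1 : 1 ≤ x := le_trans hX1 hx
    have hx0 : 0 < x := lt_of_lt_of_le one_pos hx1
    have hlx : x ≤ lam * x := le_mul_of_one_le_left hx0.le hlam
    have hlx0 : 0 < lam * x := lt_of_lt_of_le hx0 hlx
    have hXlx : X ≤ lam * x := le_trans hx hlx
    obtain ⟨hfl1, hfl2⟩ := hX (lam*x) hXlx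
    obtain ⟨hf1, hf2⟩ := hX x hx
    constructor
    · -- lower bound
      have hm : F x ≤ F (lam*x) := hFmono x (lam*x) hx1 hlx
      rw [div_mul_eq_mul_div, div_le_iff₀ hB]
      nlinarith
    · -- upper bound
      have hm : F (lam*x) ≤ F (μ^n * x) := by
        apply hFmono _ _ (le_trans hx1 hlx)
        exact mul_le_mul_of_nonneg_right hn.le hx0.le
      have hi : F (μ^n * x) ≤ 2^n * F x := hiter n x hx
      have h2 : F x ≤ B * f x := hf2
      have hp : (0:ℝ) < 2^n := by positivity
      rw [div_mul_eq_mul_div, le_div_iff₀ hA]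
      nlinarith

theorem stmt_2 (f : ℝ → ℝ) (hpos : ∀ x : ℝ, 0 < x → 0 < f x)
    (hloc : LocallyIntegrableOn f (Set.Ioi (0:ℝ)))
    (A B : ℝ) (hA : 0 < A) (hAB : A ≤ B)
    (hasymp : ∀ᶠ x in atTop, A * f x ≤ (∫ t in (1:ℝ)..x, f t / t) ∧
      (∫ t in (1:ℝ)..x, f t / t) ≤ B * f x) :
    ∀ lam : ℝ, 0 < lam → ∃ a c : ℝ, 0 < a ∧ a ≤ c ∧
      ∀ᶠ x in atTop, a * f x ≤ f (lam * x) ∧ f (lam * x) ≤ c * f x := by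
  intro lam hlam
  rcases le_or_gt 1 lam with h | h
  · exact aux_ge_one f hpos hloc A B hA hAB hasymp lam h
  · obtain ⟨a, c, ha, hac, hev⟩ := aux_ge_one f hpos hloc A B hA hAB hasymp (1/lam)
      (one_le_one_div hlam h.le)
    have hc : 0 < c := lt_of_lt_of_le ha hac
    refine ⟨1/c, 1/a, by positivity, one_div_le_one_div_of_le ha hac, ?_⟩
    have htend : Tendsto (fun x => lam * x) atTop atTop :=
      Tendsto.const_mul_atTop hlam tendsto_id
    filter_upwards [htend.eventually hev] with x hx
    have hsimp : (1/lam) * (lam * x) = x := by field_simp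
    rw [hsimp] at hx
    constructor
    · have h1 : f x / c ≤ f (lam * x) := by
        rw [div_le_iff₀ hc]; nlinarith [hx.2]
      calc 1/c * f x = f x / c := by ring
        _ ≤ f (lam * x) := h1
    · have h1 : f (lam * x) ≤ f x / a := by
        rw [le_div_iff₀ ha]; nlinarith [hx.1]
      calc f (lam * x) ≤ f x / a := h1
        _ = 1/a * f x := by ring
end

section
/- Let f : ℝ_{>0} → ℝ_{>0} be positive and locally integrable with ∫_1^x f(t)/t dt ≍ f(x). Then there exist ϑ > 0, M > 0, and x_0 such that for all y > x ≥ x_0 one has f(x)/x^ϑ ≤ M · f(y)/y^ϑ. -/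
open MeasureTheory Filter

theorem stmt_3 (f : ℝ → ℝ) (hpos : ∀ x : ℝ, 0 < x → 0 < f x)
    (hloc : LocallyIntegrableOn f (Set.Ioi (0:ℝ)))
    (A B : ℝ) (hA : 0 < A) (hAB : A ≤ B)
    (hasymp : ∀ᶠ x in atTop, A * f x ≤ (∫ t in (1:ℝ)..x, f t / t) ∧
      (∫ t in (1:ℝ)..x, f t / t) ≤ B * f x) :
    ∃ ϑ : ℝ, 0 < ϑ ∧ ∃ M : ℝ, 0 < M ∧ ∃ x₀ : ℝ,
      ∀ x y : ℝ, x₀ ≤ x → x < y → f x / x ^ ϑ ≤ M * (f y / y ^ ϑ) := by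
  obtain ⟨N, hN⟩ := eventually_atTop.1 hasymp
  set x₀ : ℝ := max N 1 with hx₀def
  have hx₀1 : (1:ℝ) ≤ x₀ := le_max_right _ _
  have hB : 0 < B := hA.trans_le hAB
  set F : ℝ → ℝ := fun x => ∫ t in (1:ℝ)..x, f t / t with hFdef
  have hbound : ∀ x, x₀ ≤ x → A * f x ≤ F x ∧ F x ≤ B * f x := by
    intro x hx
    exact hN x ((le_max_left _ _).trans hx)
  -- integrability of f t / t on intervals bounded away from 0
  have hint : ∀ x y : ℝ, 1 ≤ x → x ≤ y →
      IntervalIntegrable (fun t => f t / t) volume x y := by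
    intro x y hx hxy
    have hx0 : (0:ℝ) < x := lt_of_lt_of_le one_pos hx
    have hIcc : IntegrableOn f (Set.Icc x y) volume := by
      apply hloc.integrableOn_compact_subset _ isCompact_Icc
      intro t ht
      exact lt_of_lt_of_le hx0 ht.1
    have hmeas : AEStronglyMeasurable (fun t => f t / t)
        (volume.restrict (Set.Icc x y)) := by
      simp only [div_eq_mul_inv]
      exact hIcc.aestronglyMeasurable.mul
        (Measurable.aestronglyMeasurable (measurable_id.inv))
    have hmaj : IntegrableOn (fun t => f t / x) (Set.Icc x y) volume :=
      hIcc.div_const x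
    have hIcc' : IntegrableOn (fun t => f t / t) (Set.Icc x y) volume := by
      refine hmaj.integrable.mono hmeas ?_
      refine (ae_restrict_iff' measurableSet_Icc).2 (ae_of_all _ fun t ht => ?_)
      have ht0 : 0 < t := lt_of_lt_of_le hx0 ht.1
      have hft : 0 ≤ f t := (hpos t ht0).le
      rw [Real.norm_of_nonneg (div_nonneg hft ht0.le),
        Real.norm_of_nonneg (div_nonneg hft hx0.le)]
      exact div_le_div_of_nonneg_left hft hx0 ht.1 |>.trans_eq rfl
    rw [intervalIntegrable_iff_integrableOn_Icc_of_le hxy]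
    exact hIcc'
  -- F is monotone on [1, ∞) and splits
  have hsplit : ∀ x y : ℝ, 1 ≤ x → x ≤ y →
      F y = F x + ∫ t in x..y, f t / t := by
    intro x y hx hxy
    rw [hFdef]
    exact (intervalIntegral.integral_add_adjacent_intervals (hint 1 x le_rfl hx)
      (hint x y hx hxy)).symm
  have hmono : ∀ x y : ℝ, 1 ≤ x → x ≤ y → F x ≤ F y := by
    intro x y hx hxy
    rw [hsplit x y hx hxy]
    have : 0 ≤ ∫ t in x..y, f t / t := by
      apply intervalIntegral.integral_nonneg hxy
      intro u hu
      have hu0 : 0 < u := lt_of_lt_of_le (lt_of_lt_of_le one_pos hx) hu.1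
      exact div_nonneg (hpos u hu0).le hu0.le
    linarith
  have hFpos : ∀ x, x₀ ≤ x → 0 < F x := by
    intro x hx
    have := (hbound x hx).1
    have hfx : 0 < f x := hpos x (lt_of_lt_of_le one_pos (hx₀1.trans hx))
    nlinarith
  -- the key one-step estimate
  have hstep : ∀ x y : ℝ, x₀ ≤ x → x ≤ y →
      F x + F x / B * Real.log (y / x) ≤ F y := by
    intro x y hx hxy
    have hx1 : (1:ℝ) ≤ x := hx₀1.trans hx
    have hx0 : (0:ℝ) < x := lt_of_lt_of_le one_pos hx1
    have hy0 : (0:ℝ) < y := lt_of_lt_of_le hx0 hxy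
    have hc : 0 ≤ F x / B := (div_nonneg (hFpos x hx).le hB.le)
    have hlow : ∀ t ∈ Set.Icc x y, F x / B / t ≤ f t / t := by
      intro t ht
      have ht0 : 0 < t := lt_of_lt_of_le hx0 ht.1
      have h1 : F x ≤ F t := hmono x t hx1 ht.1
      have h2 : F t ≤ B * f t := (hbound t (hx.trans ht.1)).2
      have : F x / B ≤ f t := by
        rw [div_le_iff₀ hB]; nlinarith
      gcongr
    have hintc : IntervalIntegrable (fun t => F x / B / t) volume x y := by
      have := (intervalIntegral.intervalIntegrable_inv (f := fun t : ℝ => t) (μ := volume)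
        (a := x) (b := y) ?h1 ?h2).const_mul (F x / B)
      · simpa [div_eq_mul_inv] using this
      case h1 =>
        intro t ht
        rw [Set.uIcc_of_le hxy] at ht
        exact (lt_of_lt_of_le hx0 ht.1).ne'
      case h2 => exact continuousOn_id
    have hImono : (∫ t in x..y, F x / B / t) ≤ ∫ t in x..y, f t / t :=
      intervalIntegral.integral_mono_on hxy hintc (hint x y hx1 hxy) hlow
    have hIval : (∫ t in x..y, F x / B / t) = F x / B * Real.log (y / x) := by
      calc (∫ t in x..y, F x / B / t) = ∫ t in x..y, F x / B * t⁻¹ := by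
            simp only [div_eq_mul_inv]
        _ = F x / B * ∫ t in x..y, t⁻¹ := intervalIntegral.integral_const_mul _ _
        _ = F x / B * Real.log (y / x) := by
            rw [integral_inv_of_pos hx0 hy0]
    rw [hsplit x y hx1 hxy]
    rw [hIval] at hImono
    linarith
  set ϑ : ℝ := Real.log 2 / B with hϑdef
  have hϑpos : 0 < ϑ := div_pos (Real.log_pos one_lt_two) hB
  -- one multiplicative step
  have hstep2 : ∀ x y : ℝ, x₀ ≤ x → x ≤ y → y ≤ x * Real.exp B →
      F x * (y / x) ^ ϑ ≤ F y := by
    intro x y hx hxy hyB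
    have hx1 : (1:ℝ) ≤ x := hx₀1.trans hx
    have hx0 : (0:ℝ) < x := lt_of_lt_of_le one_pos hx1
    have hy0 : (0:ℝ) < y := lt_of_lt_of_le hx0 hxy
    have hr1 : 1 ≤ y / x := (one_le_div hx0).2 hxy
    have hr0 : 0 < y / x := lt_of_lt_of_le one_pos hr1
    set u : ℝ := Real.log (y / x) / B with hudef
    have hu0 : 0 ≤ u := div_nonneg (Real.log_nonneg hr1) hB.le
    have hu1 : u ≤ 1 := by
      rw [div_le_one hB]
      have : y / x ≤ Real.exp B := (div_le_iff₀ hx0).2 (by linarith [hyB])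
      calc Real.log (y / x) ≤ Real.log (Real.exp B) :=
            Real.log_le_log hr0 this
        _ = B := Real.log_exp B
    have hrpow : (y / x) ^ ϑ ≤ 1 + u := by
      have heq : (y / x) ^ ϑ = Real.exp ((1 - u) * 0 + u * Real.log 2) := by
        rw [Real.rpow_def_of_pos hr0]
        congr 1
        rw [hϑdef, hudef]; ring
      rw [heq]
      have hconv := convexOn_exp.2 (Set.mem_univ (0:ℝ))
        (Set.mem_univ (Real.log 2)) (by linarith : (0:ℝ) ≤ 1 - u) hu0
        (by ring : (1 - u) + u = 1)
      simp only [smul_eq_mul] at hconv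
      calc Real.exp ((1 - u) * 0 + u * Real.log 2)
          ≤ (1 - u) * Real.exp 0 + u * Real.exp (Real.log 2) := hconv
        _ = 1 + u := by
            rw [Real.exp_zero, Real.exp_log two_pos]; ring
    have h1 : F x * (y / x) ^ ϑ ≤ F x * (1 + u) :=
      mul_le_mul_of_nonneg_left hrpow (hFpos x hx).le
    have h2 : F x * (1 + u) = F x + F x / B * Real.log (y / x) := by
      rw [hudef]; field_simp
    calc F x * (y / x) ^ ϑ ≤ F x * (1 + u) := h1
      _ = F x + F x / B * Real.log (y / x) := h2
      _ ≤ F y := hstep x y hx hxy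
  -- iterate
  have hind : ∀ n : ℕ, ∀ x y : ℝ, x₀ ≤ x → x ≤ y →
      y ≤ x * Real.exp (n * B) → F x * (y / x) ^ ϑ ≤ F y := by
    intro n
    induction n with
    | zero =>
      intro x y hx hxy hyn
      have hx0 : (0:ℝ) < x := lt_of_lt_of_le one_pos (hx₀1.trans hx)
      simp only [Nat.cast_zero, zero_mul, Real.exp_zero, mul_one] at hyn
      have hxy' : y = x := le_antisymm hyn hxy
      subst hxy'
      rw [div_self hx0.ne', Real.one_rpow, mul_one]
    | succ n ih =>
      intro x y hx hxy hyn
      have hx0 : (0:ℝ) < x := lt_of_lt_of_le one_pos (hx₀1.trans hx)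
      have hy0 : (0:ℝ) < y := lt_of_lt_of_le hx0 hxy
      by_cases hcase : y ≤ x * Real.exp (n * B)
      · exact ih x y hx hxy hcase
      · push_neg at hcase
        set z : ℝ := x * Real.exp (n * B) with hzdef
        have hexp1 : (1:ℝ) ≤ Real.exp (n * B) :=
          Real.one_le_exp (by positivity)
        have hxz : x ≤ z := le_mul_of_one_le_right hx0.le hexp1
        have hz0 : (0:ℝ) < x * Real.exp (n * B) := by positivity
        have hzy : z ≤ y := hcase.le
        have hyz : y ≤ z * Real.exp B := by
          rw [hzdef, mul_assoc, ← Real.exp_add]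
          calc y ≤ x * Real.exp ((n + 1 : ℕ) * B) := hyn
            _ = x * Real.exp (n * B + B) := by
                congr 2; push_cast; ring
        have h1 : F x * (z / x) ^ ϑ ≤ F z := ih x z hx hxz le_rfl
        have h2 : F z * (y / z) ^ ϑ ≤ F y := hstep2 z y (hx.trans hxz) hzy hyz
        have hzx0 : 0 < z / x := div_pos hz0 hx0
        have hyz0 : 0 < y / z := div_pos hy0 hz0
        have hmul : (y / x) ^ ϑ = (z / x) ^ ϑ * (y / z) ^ ϑ := by
          rw [← Real.mul_rpow hzx0.le hyz0.le]
          congr 1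
          rw [div_mul_div_comm, mul_comm z y, mul_div_mul_right (c := z) _ _ hz0.ne']
        calc F x * (y / x) ^ ϑ = F x * (z / x) ^ ϑ * (y / z) ^ ϑ := by
              rw [hmul]; ring
          _ ≤ F z * (y / z) ^ ϑ :=
              mul_le_mul_of_nonneg_right h1 (Real.rpow_nonneg hyz0.le ϑ)
          _ ≤ F y := h2
  -- conclusion
  refine ⟨ϑ, hϑpos, B / A, div_pos hB hA, x₀, ?_⟩
  intro x y hx hxy
  have hx1 : (1:ℝ) ≤ x := hx₀1.trans hx
  have hx0 : (0:ℝ) < x := lt_of_lt_of_le one_pos hx1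
  have hy0 : (0:ℝ) < y := hx0.trans hxy
  have hr0 : 0 < y / x := div_pos hy0 hx0
  obtain ⟨n, hn⟩ := exists_nat_ge (Real.log (y / x) / B)
  have hyn : y ≤ x * Real.exp (n * B) := by
    have h1 : Real.log (y / x) ≤ n * B := by
      rw [div_le_iff₀ hB] at hn; exact hn
    have h2 : y / x ≤ Real.exp (n * B) := by
      calc y / x = Real.exp (Real.log (y / x)) := (Real.exp_log hr0).symm
        _ ≤ Real.exp (n * B) := Real.exp_le_exp.2 h1
    calc y = x * (y / x) := by field_simp
      _ ≤ x * Real.exp (n * B) := by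
          exact mul_le_mul_of_nonneg_left h2 hx0.le
  have hkey : F x * (y / x) ^ ϑ ≤ F y := hind n x y hx hxy.le hyn
  have hfx : A * f x ≤ F x := (hbound x hx).1
  have hfy : F y ≤ B * f y := (hbound y (hx.trans hxy.le)).2
  have hX : (0:ℝ) < x ^ ϑ := Real.rpow_pos_of_pos hx0 ϑ
  have hY : (0:ℝ) < y ^ ϑ := Real.rpow_pos_of_pos hy0 ϑ
  have hdr : (y / x) ^ ϑ = y ^ ϑ / x ^ ϑ := Real.div_rpow hy0.le hx0.le ϑ
  rw [hdr] at hkey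
  -- A * f x * (y^ϑ / x^ϑ) ≤ F x * (y^ϑ/x^ϑ) ≤ F y ≤ B * f y
  have hchain : A * f x * (y ^ ϑ / x ^ ϑ) ≤ B * f y := by
    calc A * f x * (y ^ ϑ / x ^ ϑ) ≤ F x * (y ^ ϑ / x ^ ϑ) :=
          mul_le_mul_of_nonneg_right hfx (by positivity)
      _ ≤ F y := hkey
      _ ≤ B * f y := hfy
  have h2 : A * f x * y ^ ϑ ≤ B * f y * x ^ ϑ := by
    have hm := mul_le_mul_of_nonneg_right hchain hX.le
    calc A * f x * y ^ ϑ = A * f x * (y ^ ϑ / x ^ ϑ) * x ^ ϑ := by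
          field_simp
      _ ≤ B * f y * x ^ ϑ := hm
  have hR : B / A * (f y / y ^ ϑ) = B * f y / (A * y ^ ϑ) :=
    div_mul_div_comm B A (f y) (y ^ ϑ)
  rw [hR, div_le_div_iff₀ hX (by positivity)]
  nlinarith [h2]
end

section
/- Let f : ℝ_{>0} → ℝ_{>0} be positive and locally integrable. Suppose (i) for every λ > 0, f(λx) ≍_λ f(x), and (ii) there exist ϑ > 0, M > 0, x_0 such that f(x)/x^ϑ ≤ M f(y)/y^ϑ whenever y > x ≥ x_0. Then ∫_1^x f(t)/t dt ≍ f(x). -/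
open MeasureTheory Filter

set_option maxHeartbeats 1000000

theorem stmt_4 (f : ℝ → ℝ) (hpos : ∀ x : ℝ, 0 < x → 0 < f x)
    (hloc : LocallyIntegrableOn f (Set.Ioi (0:ℝ)))
    (h1 : ∀ lam : ℝ, 0 < lam → ∃ a c : ℝ, 0 < a ∧ a ≤ c ∧
      ∀ᶠ x in atTop, a * f x ≤ f (lam * x) ∧ f (lam * x) ≤ c * f x)
    (h2 : ∃ ϑ : ℝ, 0 < ϑ ∧ ∃ M : ℝ, 0 < M ∧ ∃ x₀ : ℝ,
      ∀ x y : ℝ, x₀ ≤ x → x < y → f x / x ^ ϑ ≤ M * (f y / y ^ ϑ)) :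
    ∃ A B : ℝ, 0 < A ∧ A ≤ B ∧
      ∀ᶠ x in atTop, A * f x ≤ (∫ t in (1:ℝ)..x, f t / t) ∧
        (∫ t in (1:ℝ)..x, f t / t) ≤ B * f x := by
  obtain ⟨ϑ, hϑ, M, hM, x₀, hx₀⟩ := h2
  obtain ⟨a, c, ha, hac, hev⟩ := h1 (1/2) (by norm_num)
  set x₁ : ℝ := max x₀ 1 with hx₁def
  have hx₁1 : (1:ℝ) ≤ x₁ := le_max_right _ _
  have hx₁0 : (0:ℝ) < x₁ := lt_of_lt_of_le one_pos hx₁1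
  have hx₀x₁ : x₀ ≤ x₁ := le_max_left _ _
  -- interval integrability of f t / t on positive intervals
  have hii : ∀ u v : ℝ, 0 < u → u ≤ v →
      IntervalIntegrable (fun t => f t / t) volume u v := by
    intro u v hu huv
    have hsub : Set.Icc u v ⊆ Set.Ioi (0:ℝ) := fun t ht => lt_of_lt_of_le hu ht.1
    have hfint : IntegrableOn f (Set.Icc u v) :=
      hloc.integrableOn_compact_subset hsub isCompact_Icc
    have : IntegrableOn (fun t => f t / t) (Set.Icc u v) := by
      apply Integrable.mono' (g := fun t => u⁻¹ * ‖f t‖) (hfint.norm.const_mul u⁻¹)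
      · simp only [div_eq_mul_inv]
        exact hfint.aestronglyMeasurable.mul
          (Measurable.aestronglyMeasurable measurable_inv)
      · filter_upwards [ae_restrict_mem measurableSet_Icc] with t ht
        have ht0 : 0 < t := lt_of_lt_of_le hu ht.1
        have : ‖f t / t‖ = ‖f t‖ / t := by
          rw [norm_div, Real.norm_eq_abs t, abs_of_pos ht0]
        rw [this, div_eq_inv_mul]
        apply mul_le_mul_of_nonneg_right _ (norm_nonneg _)
        exact inv_anti₀ hu ht.1
    exact (this.mono_set (by rw [Set.uIcc_of_le huv])).intervalIntegrable
  set C : ℝ := ∫ t in (1:ℝ)..x₁, f t / t with hCdef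
  -- eventually f x ≥ C
  have hCev : ∀ᶠ x in atTop, C ≤ f x := by
    have hx₁ϑ : (0:ℝ) < x₁ ^ ϑ := Real.rpow_pos_of_pos hx₁0 _
    have hfx₁ : 0 < f x₁ := hpos _ hx₁0
    have htend : Tendsto (fun x : ℝ => x ^ ϑ) atTop atTop :=
      tendsto_rpow_atTop hϑ
    filter_upwards [htend.eventually_ge_atTop (C * (M * x₁ ^ ϑ) / f x₁),
        eventually_gt_atTop x₁, eventually_gt_atTop 0] with x hxK hxx₁ hx0
    have hxϑ : (0:ℝ) < x ^ ϑ := Real.rpow_pos_of_pos hx0 _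
    have key := hx₀ x₁ x hx₀x₁ hxx₁
    -- f x ≥ f x₁ * x ^ ϑ / (M * x₁ ^ ϑ)
    have h1' : f x₁ * x ^ ϑ / (M * x₁ ^ ϑ) ≤ f x := by
      rw [div_le_iff₀ hx₁ϑ] at key
      rw [div_le_iff₀ (by positivity)]
      calc f x₁ * x ^ ϑ ≤ M * (f x / x ^ ϑ) * x₁ ^ ϑ * x ^ ϑ := by
            exact mul_le_mul_of_nonneg_right key (le_of_lt hxϑ)
        _ = f x * (M * x₁ ^ ϑ) := by field_simp
    refine le_trans ?_ h1'
    rw [le_div_iff₀ (by positivity : (0:ℝ) < M * x₁ ^ ϑ)]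
    have h3 := (div_le_iff₀ hfx₁).mp hxK
    nlinarith [h3]
  refine ⟨a / (2 * M), a / (2 * M) + (1 + M / ϑ), by positivity, by
    have : (0:ℝ) < 1 + M / ϑ := by positivity
    linarith, ?_⟩
  filter_upwards [eventually_ge_atTop (2 * x₁), hev, hCev] with x hx2 hevx hCx
  have hx₁x : x₁ ≤ x := by linarith
  have hx0 : (0:ℝ) < x := lt_of_lt_of_le hx₁0 hx₁x
  have hxh : x₁ ≤ x / 2 := by linarith
  have hxh0 : (0:ℝ) < x / 2 := by linarith
  have h1x : (1:ℝ) ≤ x := le_trans hx₁1 hx₁x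
  have hxϑ : (0:ℝ) < x ^ ϑ := Real.rpow_pos_of_pos hx0 _
  have hfx : 0 < f x := hpos _ hx0
  have hne : ∀ b : ℝ, ∀ᵐ t : ℝ, t ≠ b := by
    intro b
    rw [Filter.eventually_iff, mem_ae_iff]
    simpa using measure_singleton b
  -- split at x₁
  have hsplit : (∫ t in (1:ℝ)..x, f t / t) = C + ∫ t in x₁..x, f t / t := by
    rw [hCdef, intervalIntegral.integral_add_adjacent_intervals
      (hii 1 x₁ one_pos hx₁1) (hii x₁ x hx₁0 hx₁x)]
  -- upper bound for ∫ x₁..x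
  have hupper : (∫ t in x₁..x, f t / t) ≤ M / ϑ * f x := by
    have hgi : IntervalIntegrable (fun t => M * (f x / x ^ ϑ) * t ^ (ϑ - 1))
        volume x₁ x := by
      apply IntervalIntegrable.const_mul
      refine intervalIntegral.intervalIntegrable_rpow (Or.inr ?_)
      rw [Set.uIcc_of_le hx₁x]
      intro h; exact absurd h.1 (by linarith)
    have hmono : (∫ t in x₁..x, f t / t) ≤
        ∫ t in x₁..x, M * (f x / x ^ ϑ) * t ^ (ϑ - 1) := by
      apply intervalIntegral.integral_mono_ae_restrict hx₁x
        (hii x₁ x hx₁0 hx₁x) hgi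
      filter_upwards [ae_restrict_mem measurableSet_Icc,
        ae_restrict_of_ae (hne x)] with t ht htx
      have ht0 : 0 < t := lt_of_lt_of_le hx₁0 ht.1
      have htx' : t < x := lt_of_le_of_ne ht.2 htx
      have key : f t / t ^ ϑ ≤ M * (f x / x ^ ϑ) :=
        hx₀ t x (le_trans hx₀x₁ ht.1) htx'
      have htϑ : (0:ℝ) < t ^ ϑ := Real.rpow_pos_of_pos ht0 _
      have heq : f t / t = (f t / t ^ ϑ) * t ^ (ϑ - 1) := by
        rw [Real.rpow_sub ht0, Real.rpow_one]
        field_simp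
      rw [heq]
      exact mul_le_mul_of_nonneg_right key (Real.rpow_nonneg ht0.le _)
    refine hmono.trans ?_
    rw [intervalIntegral.integral_const_mul, integral_rpow (Or.inr ⟨by
      intro h; exact absurd h (by norm_num [hϑ.ne']), by
      rw [Set.uIcc_of_le hx₁x]; intro h; exact absurd h.1 (by linarith)⟩)]
    have : ϑ - 1 + 1 = ϑ := by ring
    rw [this]
    have hx₁ϑ : (0:ℝ) ≤ x₁ ^ ϑ := Real.rpow_nonneg hx₁0.le _
    calc M * (f x / x ^ ϑ) * ((x ^ ϑ - x₁ ^ ϑ) / ϑ)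
        ≤ M * (f x / x ^ ϑ) * (x ^ ϑ / ϑ) := by
          have hnum : (x ^ ϑ - x₁ ^ ϑ) / ϑ ≤ x ^ ϑ / ϑ :=
            div_le_div_of_nonneg_right (by linarith) hϑ.le
          exact mul_le_mul_of_nonneg_left hnum
            (mul_nonneg hM.le (div_nonneg hfx.le hxϑ.le))
      _ = M / ϑ * f x := by field_simp
  -- lower bound
  have hlower : a / (2 * M) * f x ≤ ∫ t in (1:ℝ)..x, f t / t := by
    have hsplit2 : (∫ t in (1:ℝ)..x, f t / t) =
        (∫ t in (1:ℝ)..(x/2), f t / t) + ∫ t in (x/2)..x, f t / t := by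
      rw [intervalIntegral.integral_add_adjacent_intervals
        (hii 1 (x/2) one_pos (le_trans hx₁1 hxh)) (hii (x/2) x hxh0 (by linarith))]
    have h0 : 0 ≤ ∫ t in (1:ℝ)..(x/2), f t / t := by
      apply intervalIntegral.integral_nonneg (le_trans hx₁1 hxh)
      intro t ht
      have ht0 : 0 < t := lt_of_lt_of_le one_pos ht.1
      exact (div_pos (hpos t ht0) ht0).le
    have hconst : f (x/2) / (M * x) * (x - x/2) ≤ ∫ t in (x/2)..x, f t / t := by
      have := intervalIntegral.integral_const (a := x/2) (b := x) (f (x/2) / (M * x))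
      have hmono : (∫ t in (x/2)..x, (f (x/2) / (M * x) : ℝ)) ≤
          ∫ t in (x/2)..x, f t / t := by
        apply intervalIntegral.integral_mono_ae_restrict (by linarith)
          intervalIntegrable_const (hii (x/2) x hxh0 (by linarith))
        filter_upwards [ae_restrict_mem measurableSet_Icc,
          ae_restrict_of_ae (hne (x/2))] with t ht htx
        have ht0 : 0 < t := lt_of_lt_of_le hxh0 ht.1
        have htx' : x/2 < t := lt_of_le_of_ne ht.1 (Ne.symm htx)
        have key : f (x/2) / (x/2) ^ ϑ ≤ M * (f t / t ^ ϑ) :=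
          hx₀ (x/2) t (le_trans hx₀x₁ hxh) htx'
        have htϑ : (0:ℝ) < t ^ ϑ := Real.rpow_pos_of_pos ht0 _
        have hhϑ : (0:ℝ) < (x/2) ^ ϑ := Real.rpow_pos_of_pos hxh0 _
        have hmono2 : (x/2) ^ ϑ ≤ t ^ ϑ :=
          Real.rpow_le_rpow hxh0.le htx'.le hϑ.le
        -- f t ≥ f (x/2) / M
        have hft : f (x/2) / M ≤ f t := by
          rw [div_le_iff₀ hhϑ] at key
          rw [div_le_iff₀ hM]
          calc f (x/2) ≤ M * (f t / t ^ ϑ) * (x/2) ^ ϑ := key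
            _ ≤ M * (f t / t ^ ϑ) * t ^ ϑ :=
                mul_le_mul_of_nonneg_left hmono2
                  (mul_nonneg hM.le (div_nonneg (hpos t ht0).le htϑ.le))
            _ = f t * M := by field_simp
        calc f (x/2) / (M * x) = (f (x/2) / M) / x := by ring
          _ ≤ f t / x := div_le_div_of_nonneg_right hft hx0.le
          _ ≤ f t / t := div_le_div_of_nonneg_left (hpos t ht0).le ht0 ht.2
      calc f (x/2) / (M * x) * (x - x/2) = (x - x/2) • (f (x/2) / (M * x)) := by
            simp [smul_eq_mul]; ring
        _ = ∫ t in (x/2)..x, (f (x/2) / (M * x) : ℝ) := this.symm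
        _ ≤ _ := hmono
    have hhalf : a * f x ≤ f (x/2) := by
      have := hevx.1
      rwa [show (1:ℝ)/2 * x = x/2 by ring] at this
    have hfinal : a / (2 * M) * f x ≤ f (x/2) / (M * x) * (x - x/2) := by
      have hxx : x - x/2 = x/2 := by ring
      rw [hxx]
      have : f (x/2) / (M * x) * (x/2) = f (x/2) / (2 * M) := by
        field_simp
      rw [this, div_mul_eq_mul_div, div_le_div_iff₀ (by positivity) (by positivity)]
      calc a * f x * (2 * M) ≤ f (x/2) * (2 * M) :=
            mul_le_mul_of_nonneg_right hhalf (by positivity)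
        _ = f (x/2) * (2 * M) := rfl
    rw [hsplit2]
    linarith [hfinal.trans hconst]
  constructor
  · exact hlower
  · rw [hsplit]
    have : (a / (2 * M) + (1 + M / ϑ)) * f x
        = a / (2 * M) * f x + f x + M / ϑ * f x := by ring
    rw [this]
    have hA : 0 ≤ a / (2 * M) * f x := by positivity
    linarith
end

section
/- Let L ≥ 1 and 0 ≤ r < L be integers, and let α ≥ β > 0 be reals with β ≤ 1. Then S(n) := Σ_{1 ≤ m ≤ n-1, m ≡ r (mod L)} m^{α-1} (n-m)^{β-1} = (Γ(α)Γ(β)/Γ(α+β)) · n^{α+β-1}/L + O_{α,β,L}(n^{α-1}) as n → ∞. -/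
open MeasureTheory intervalIntegral

lemma real_beta_scaled {α β : ℝ} (hα : 0 < α) (hβ : 0 < β) {n : ℝ} (hn : 0 < n) :
    ∫ t in (0:ℝ)..n, t ^ (α - 1) * (n - t) ^ (β - 1) =
      Real.Gamma α * Real.Gamma β / Real.Gamma (α + β) * n ^ (α + β - 1) := by
  have key : ((∫ t in (0:ℝ)..n, t ^ (α - 1) * (n - t) ^ (β - 1) : ℝ) : ℂ)
      = ∫ t in (0:ℝ)..n, (t : ℂ) ^ ((α : ℂ) - 1) * ((n : ℂ) - t) ^ ((β : ℂ) - 1) := by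
    rw [← intervalIntegral.integral_ofReal]
    refine intervalIntegral.integral_congr fun x hx => ?_
    rw [Set.uIcc_of_le hn.le] at hx
    have e1 : (α : ℂ) - 1 = ((α - 1 : ℝ) : ℂ) := by push_cast; ring
    have e2 : (β : ℂ) - 1 = ((β - 1 : ℝ) : ℂ) := by push_cast; ring
    have e3 : (n : ℂ) - (x : ℂ) = ((n - x : ℝ) : ℂ) := by push_cast; ring
    rw [e1, e2, e3, ← Complex.ofReal_cpow hx.1, ← Complex.ofReal_cpow (by linarith [hx.2])]
    push_cast
    ring
  have h1 := Complex.Gamma_mul_Gamma_eq_betaIntegral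
    (s := (α : ℂ)) (t := (β : ℂ)) (by simpa using hα) (by simpa using hβ)
  have h2 := Complex.betaIntegral_scaled (α : ℂ) (β : ℂ) hn
  have hG : Real.Gamma (α + β) ≠ 0 := (Real.Gamma_pos_of_pos (by linarith)).ne'
  have hGc : Complex.Gamma ((α : ℂ) + β) ≠ 0 := by
    rw [← Complex.ofReal_add, Complex.Gamma_ofReal]
    exact_mod_cast hG
  have hbeta : Complex.betaIntegral (α : ℂ) (β : ℂ)
      = Complex.Gamma α * Complex.Gamma β / Complex.Gamma ((α : ℂ) + β) := by
    rw [eq_div_iff hGc, mul_comm, ← h1]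
  have hcpow : ((n : ℂ)) ^ ((α : ℂ) + β - 1) = ((n ^ (α + β - 1) : ℝ) : ℂ) := by
    have e : (α : ℂ) + β - 1 = ((α + β - 1 : ℝ) : ℂ) := by push_cast; ring
    rw [e, Complex.ofReal_cpow hn.le]
  have : ((∫ t in (0:ℝ)..n, t ^ (α - 1) * (n - t) ^ (β - 1) : ℝ) : ℂ)
      = ((Real.Gamma α * Real.Gamma β / Real.Gamma (α + β) * n ^ (α + β - 1) : ℝ) : ℂ) := by
    rw [key, h2, hbeta, hcpow]
    rw [Complex.ofReal_mul, Complex.ofReal_div, Complex.ofReal_mul]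
    rw [Complex.Gamma_ofReal, Complex.Gamma_ofReal, ← Complex.ofReal_add, Complex.Gamma_ofReal]
    ring
  exact_mod_cast this

open MeasureTheory intervalIntegral Finset

-- bound for x^γ when x between a and b
lemma rpow_bound_between {x a b γ : ℝ} (ha : 0 < a) (hax : a ≤ x) (hxb : x ≤ b) :
    x ^ γ ≤ max (a ^ γ) (b ^ γ) := by
  rcases le_total 0 γ with hγ | hγ
  · exact le_max_of_le_right (Real.rpow_le_rpow (by linarith) hxb hγ)
  · exact le_max_of_le_left (Real.rpow_le_rpow_of_nonpos ha hax hγ)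

-- oscillation of monotone rpow
lemma rpow_osc {x y t γ : ℝ} (hx : 0 < x) (hxt : x ≤ t) (hty : t ≤ y) :
    |x ^ γ - t ^ γ| ≤ |y ^ γ - x ^ γ| := by
  rcases le_total 0 γ with hγ | hγ
  · have h1 : x ^ γ ≤ t ^ γ := Real.rpow_le_rpow hx.le hxt hγ
    have h2 : t ^ γ ≤ y ^ γ := Real.rpow_le_rpow (by linarith) hty hγ
    rw [abs_sub_comm, abs_of_nonneg (by linarith), abs_of_nonneg (by linarith)]
    linarith
  · have h1 : t ^ γ ≤ x ^ γ := Real.rpow_le_rpow_of_nonpos hx hxt hγ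
    have h2 : y ^ γ ≤ t ^ γ := Real.rpow_le_rpow_of_nonpos (by linarith) hty hγ
    rw [abs_of_nonneg (by linarith), abs_sub_comm, abs_of_nonneg (by linarith)]
    linarith

-- continuity of F on suitable sets
lemma contF {n γ δ : ℝ} {s : Set ℝ} (hs : ∀ x ∈ s, 0 < x ∧ x < n) :
    ContinuousOn (fun t : ℝ => t ^ γ * (n - t) ^ δ) s := by
  apply ContinuousOn.mul
  · exact continuousOn_id.rpow_const fun x hx => Or.inl (hs x hx).1.ne'
  · exact (continuousOn_const.sub continuousOn_id).rpow_const
      fun x hx => Or.inl (by have := (hs x hx).2; intro h; simp only [Pi.sub_apply, id] at h; linarith)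

-- telescoping sum over Ico
lemma telescope_Ico (g : ℕ → ℝ) {a b : ℕ} (hab : a ≤ b) :
    ∑ k ∈ Finset.Ico a b, (g (k + 1) - g k) = g b - g a := by
  induction b, hab using Nat.le_induction with
  | base => simp
  | succ b hab ih => rw [Finset.sum_Ico_succ_top (by omega), ih]; ring

-- generic bound for the oscillation sums
lemma sum_osc {u v : ℕ → ℝ} {a b : ℕ} (hab : a ≤ b) {Bu Bv : ℝ}
    (hvm : ∀ k, a ≤ k → k < b → v k ≤ v (k + 1))
    (hum : (∀ k, a ≤ k → k < b → u k ≤ u (k + 1)) ∨ (∀ k, a ≤ k → k < b → u (k + 1) ≤ u k))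
    (hu0 : ∀ k, a ≤ k → k ≤ b → 0 ≤ u k) (hv0 : ∀ k, a ≤ k → k ≤ b → 0 ≤ v k)
    (huB : ∀ k, a ≤ k → k ≤ b → u k ≤ Bu) (hvB : ∀ k, a ≤ k → k ≤ b → v k ≤ Bv) :
    ∑ k ∈ Finset.Ico a b, (u k * (v (k + 1) - v k) + |u (k + 1) - u k| * v (k + 1)) ≤
      2 * (Bu * Bv) := by
  have hBu : 0 ≤ Bu := le_trans (hu0 a le_rfl hab) (huB a le_rfl hab)
  have hBv : 0 ≤ Bv := le_trans (hv0 a le_rfl hab) (hvB a le_rfl hab)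
  have step : ∀ k ∈ Finset.Ico a b,
      u k * (v (k + 1) - v k) + |u (k + 1) - u k| * v (k + 1) ≤
      Bu * (v (k + 1) - v k) + Bv * |u (k + 1) - u k| := by
    intro k hk
    rw [Finset.mem_Ico] at hk
    have h1 : u k * (v (k + 1) - v k) ≤ Bu * (v (k + 1) - v k) :=
      mul_le_mul_of_nonneg_right (huB k hk.1 (by omega))
        (by have := hvm k hk.1 hk.2; linarith)
    have h2 : |u (k + 1) - u k| * v (k + 1) ≤ |u (k + 1) - u k| * Bv :=
      mul_le_mul_of_nonneg_left (hvB (k + 1) (by omega) (by omega)) (abs_nonneg _)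
    nlinarith [abs_nonneg (u (k+1) - u k)]
  calc ∑ k ∈ Finset.Ico a b, (u k * (v (k + 1) - v k) + |u (k + 1) - u k| * v (k + 1))
      ≤ ∑ k ∈ Finset.Ico a b, (Bu * (v (k + 1) - v k) + Bv * |u (k + 1) - u k|) :=
        Finset.sum_le_sum step
    _ = Bu * ∑ k ∈ Finset.Ico a b, (v (k + 1) - v k)
        + Bv * ∑ k ∈ Finset.Ico a b, |u (k + 1) - u k| := by
        rw [Finset.sum_add_distrib, Finset.mul_sum, Finset.mul_sum]
    _ ≤ Bu * Bv + Bv * Bu := by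
        have hts : ∑ k ∈ Finset.Ico a b, (v (k + 1) - v k) = v b - v a := telescope_Ico v hab
        have h1 : Bu * ∑ k ∈ Finset.Ico a b, (v (k + 1) - v k) ≤ Bu * Bv := by
          rw [hts]
          apply mul_le_mul_of_nonneg_left _ hBu
          have := hvB b hab le_rfl
          have := hv0 a le_rfl hab
          linarith
        have h2 : ∑ k ∈ Finset.Ico a b, |u (k + 1) - u k| ≤ Bu := by
          rcases hum with hm | hm
          · have : ∑ k ∈ Finset.Ico a b, |u (k + 1) - u k|
                = ∑ k ∈ Finset.Ico a b, (u (k + 1) - u k) := by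
              apply Finset.sum_congr rfl
              intro k hk
              rw [Finset.mem_Ico] at hk
              exact abs_of_nonneg (by have := hm k hk.1 hk.2; linarith)
            rw [this, telescope_Ico u hab]
            have := hu0 a le_rfl hab
            have := huB b hab le_rfl
            linarith
          · have : ∑ k ∈ Finset.Ico a b, |u (k + 1) - u k|
                = ∑ k ∈ Finset.Ico a b, (u k - u (k + 1)) := by
              apply Finset.sum_congr rfl
              intro k hk
              rw [Finset.mem_Ico] at hk
              rw [abs_sub_comm]
              exact abs_of_nonneg (by have := hm k hk.1 hk.2; linarith)
            have hts2 : ∑ k ∈ Finset.Ico a b, (u k - u (k + 1))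
                = -(∑ k ∈ Finset.Ico a b, (u (k + 1) - u k)) := by
              rw [← Finset.sum_neg_distrib]
              apply Finset.sum_congr rfl; intros; ring
            rw [this, hts2, telescope_Ico u hab]
            have := hu0 b hab le_rfl
            have := huB a le_rfl hab
            linarith
        linarith [mul_le_mul_of_nonneg_left h2 hBv]
    _ = 2 * (Bu * Bv) := by ring
lemma interval_osc {α β n a ℓ : ℝ} (hβ1 : β ≤ 1) (ha : 1 ≤ a) (hℓ : 0 < ℓ)
    (hab : a + ℓ ≤ n - 1) :
    |ℓ * (a ^ (α - 1) * (n - a) ^ (β - 1)) -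
        ∫ t in a..(a + ℓ), t ^ (α - 1) * (n - t) ^ (β - 1)| ≤
      ℓ * (a ^ (α - 1) * ((n - (a + ℓ)) ^ (β - 1) - (n - a) ^ (β - 1)) +
        |(a + ℓ) ^ (α - 1) - a ^ (α - 1)| * (n - (a + ℓ)) ^ (β - 1)) := by
  set F : ℝ → ℝ := fun t => t ^ (α - 1) * (n - t) ^ (β - 1) with hF
  set D : ℝ := a ^ (α - 1) * ((n - (a + ℓ)) ^ (β - 1) - (n - a) ^ (β - 1)) +
        |(a + ℓ) ^ (α - 1) - a ^ (α - 1)| * (n - (a + ℓ)) ^ (β - 1) with hD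
  have hsub : Set.uIcc a (a + ℓ) ⊆ Set.Icc a (a + ℓ) := by
    rw [Set.uIcc_of_le (by linarith)]
  have hint : IntervalIntegrable F volume a (a + ℓ) := by
    apply ContinuousOn.intervalIntegrable
    apply (contF (n := n) ?_).mono hsub
    rintro x ⟨hx1, hx2⟩
    constructor <;> linarith
  have key : ℓ * F a - ∫ t in a..(a + ℓ), F t = ∫ t in a..(a + ℓ), (F a - F t) := by
    rw [intervalIntegral.integral_sub (intervalIntegrable_const) hint,
      intervalIntegral.integral_const]
    simp only [add_sub_cancel_left, smul_eq_mul]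
  rw [key]
  have hptwise : ∀ t ∈ Set.uIoc a (a + ℓ), ‖F a - F t‖ ≤ D := by
    intro t ht
    rw [Set.uIoc_of_le (by linarith)] at ht
    obtain ⟨ht1, ht2⟩ := ht
    have hta : a ≤ t := ht1.le
    have h0t : (0:ℝ) < t := by linarith
    have hvta : (n - t) ^ (β - 1) ≤ (n - (a + ℓ)) ^ (β - 1) :=
      Real.rpow_le_rpow_of_nonpos (by linarith) (by linarith) (by linarith)
    have hvat : (n - a) ^ (β - 1) ≤ (n - t) ^ (β - 1) :=
      Real.rpow_le_rpow_of_nonpos (by linarith) (by linarith) (by linarith)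
    have huosc : |a ^ (α - 1) - t ^ (α - 1)| ≤ |(a + ℓ) ^ (α - 1) - a ^ (α - 1)| :=
      rpow_osc (by linarith) hta ht2
    have hunn : (0:ℝ) ≤ a ^ (α - 1) := Real.rpow_nonneg (by linarith) _
    have hvnn : (0:ℝ) ≤ (n - t) ^ (β - 1) := Real.rpow_nonneg (by linarith) _
    have decomp : F a - F t = a ^ (α - 1) * ((n - a) ^ (β - 1) - (n - t) ^ (β - 1)) +
        (a ^ (α - 1) - t ^ (α - 1)) * (n - t) ^ (β - 1) := by
      simp only [hF]; ring
    rw [Real.norm_eq_abs, decomp]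
    calc |a ^ (α - 1) * ((n - a) ^ (β - 1) - (n - t) ^ (β - 1)) +
        (a ^ (α - 1) - t ^ (α - 1)) * (n - t) ^ (β - 1)|
        ≤ |a ^ (α - 1) * ((n - a) ^ (β - 1) - (n - t) ^ (β - 1))| +
          |(a ^ (α - 1) - t ^ (α - 1)) * (n - t) ^ (β - 1)| := abs_add_le _ _
      _ = a ^ (α - 1) * ((n - t) ^ (β - 1) - (n - a) ^ (β - 1)) +
          |a ^ (α - 1) - t ^ (α - 1)| * (n - t) ^ (β - 1) := by
          rw [abs_mul, abs_mul, abs_of_nonneg hunn, abs_of_nonneg hvnn, abs_sub_comm,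
            abs_of_nonneg (by linarith)]
      _ ≤ D := by
          rw [hD]
          have h1 : a ^ (α - 1) * ((n - t) ^ (β - 1) - (n - a) ^ (β - 1)) ≤
              a ^ (α - 1) * ((n - (a + ℓ)) ^ (β - 1) - (n - a) ^ (β - 1)) :=
            mul_le_mul_of_nonneg_left (by linarith) hunn
          have h2 : |a ^ (α - 1) - t ^ (α - 1)| * (n - t) ^ (β - 1) ≤
              |(a + ℓ) ^ (α - 1) - a ^ (α - 1)| * (n - (a + ℓ)) ^ (β - 1) :=
            mul_le_mul huosc hvta hvnn (abs_nonneg _)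
          linarith
  have := intervalIntegral.norm_integral_le_of_norm_le_const hptwise
  rw [Real.norm_eq_abs] at this
  have habs : |a + ℓ - a| = ℓ := by rw [add_sub_cancel_left, abs_of_pos hℓ]
  rw [habs] at this
  linarith [this, mul_comm D ℓ]
lemma tail0 {α β n c : ℝ} (hα : 0 < α) (hβ1 : β ≤ 1) (hc : 0 < c) (hcn : c < n) :
    ∫ t in (0:ℝ)..c, t ^ (α - 1) * (n - t) ^ (β - 1) ≤ (n - c) ^ (β - 1) * (c ^ α / α) := by
  have hIu : IntervalIntegrable (fun t : ℝ => t ^ (α - 1)) volume 0 c :=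
    intervalIntegral.intervalIntegrable_rpow' (by linarith)
  have hvc : ContinuousOn (fun t : ℝ => (n - t) ^ (β - 1)) (Set.uIcc 0 c) := by
    apply (continuousOn_const.sub continuousOn_id).rpow_const
    intro x hx
    rw [Set.uIcc_of_le hc.le] at hx
    left
    have := hx.2
    intro h; simp only [Pi.sub_apply, id] at h; linarith
  have hIF : IntervalIntegrable (fun t : ℝ => t ^ (α - 1) * (n - t) ^ (β - 1)) volume 0 c :=
    hIu.mul_continuousOn hvc
  have hIg : IntervalIntegrable (fun t : ℝ => t ^ (α - 1) * (n - c) ^ (β - 1)) volume 0 c :=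
    hIu.mul_const _
  have hmono := intervalIntegral.integral_mono_on hc.le hIF hIg (fun x hx => by
    have hx0 : (0:ℝ) ≤ x := hx.1
    have hxc : x ≤ c := hx.2
    have hv : (n - x) ^ (β - 1) ≤ (n - c) ^ (β - 1) :=
      Real.rpow_le_rpow_of_nonpos (by linarith) (by linarith) (by linarith)
    exact mul_le_mul_of_nonneg_left hv (Real.rpow_nonneg hx0 _))
  have hcomp : ∫ t in (0:ℝ)..c, t ^ (α - 1) * (n - c) ^ (β - 1)
      = (n - c) ^ (β - 1) * (c ^ α / α) := by
    rw [intervalIntegral.integral_mul_const, integral_rpow (Or.inl (by linarith))]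
    rw [show α - 1 + 1 = α by ring, Real.zero_rpow hα.ne']
    ring
  linarith [hmono, hcomp.symm.le]

lemma tail1 {α β n c U : ℝ} (hβ : 0 < β) (hc : 0 < c) (hcn : c < n)
    (hU : ∀ t ∈ Set.Icc c n, t ^ (α - 1) ≤ U) :
    ∫ t in c..n, t ^ (α - 1) * (n - t) ^ (β - 1) ≤ U * ((n - c) ^ β / β) := by
  have hIv : IntervalIntegrable (fun t : ℝ => (n - t) ^ (β - 1)) volume c n := by
    have h0 : IntervalIntegrable (fun t : ℝ => t ^ (β - 1)) volume 0 (n - c) :=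
      intervalIntegral.intervalIntegrable_rpow' (by linarith)
    have := h0.comp_sub_left n
    exact (IntervalIntegrable.symm (by simpa using this))
  have huc : ContinuousOn (fun t : ℝ => t ^ (α - 1)) (Set.uIcc c n) := by
    apply continuousOn_id.rpow_const
    intro x hx
    rw [Set.uIcc_of_le hcn.le] at hx
    left
    simp only [id]
    have := hx.1
    intro h; linarith
  have hIF : IntervalIntegrable (fun t : ℝ => t ^ (α - 1) * (n - t) ^ (β - 1)) volume c n :=
    hIv.continuousOn_mul huc
  have hIg : IntervalIntegrable (fun t : ℝ => U * (n - t) ^ (β - 1)) volume c n :=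
    hIv.const_mul _
  have hmono := intervalIntegral.integral_mono_on hcn.le hIF hIg (fun x hx => by
    have hv : (0:ℝ) ≤ (n - x) ^ (β - 1) := Real.rpow_nonneg (by linarith [hx.2]) _
    exact mul_le_mul_of_nonneg_right (hU x hx) hv)
  have hcomp : ∫ t in c..n, U * (n - t) ^ (β - 1) = U * ((n - c) ^ β / β) := by
    rw [intervalIntegral.integral_const_mul]
    have := intervalIntegral.integral_comp_sub_left (a := c) (b := n)
      (fun s : ℝ => s ^ (β - 1)) n
    rw [this, sub_self, integral_rpow (Or.inl (by linarith))]
    rw [show β - 1 + 1 = β by ring, Real.zero_rpow hβ.ne']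
    ring
  linarith [hmono, hcomp.symm.le]

lemma AP_filter {L r n : ℕ} (hL : 1 ≤ L) (hr : r < L) {m0 : ℕ}
    (hm0 : m0 = if r = 0 then L else r) (hn : m0 + L + 1 ≤ n) :
    (Finset.Ioo 0 n).filter (fun m => m % L = r) =
      (Finset.range ((n - 1 - m0) / L + 1)).image (fun k => m0 + k * L) := by
  have hfacts : m0 % L = r ∧ 1 ≤ m0 ∧ m0 ≤ L := by
    rcases Nat.eq_zero_or_pos r with h | h
    · rw [h, if_pos rfl] at hm0
      rw [hm0, h]
      exact ⟨Nat.mod_self L, hL, le_rfl⟩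
    · rw [if_neg (by omega)] at hm0
      rw [hm0]
      exact ⟨Nat.mod_eq_of_lt hr, h, hr.le⟩
  obtain ⟨hm0mod, hm01, hm0L⟩ := hfacts
  ext m
  simp only [Finset.mem_filter, Finset.mem_Ioo, Finset.mem_image, Finset.mem_range]
  constructor
  · rintro ⟨⟨hm0', hmn⟩, hmod⟩
    have hdiv := Nat.div_add_mod m L
    rw [hmod] at hdiv
    generalize hq : m / L = q at hdiv
    rcases Nat.eq_zero_or_pos r with h | h
    · -- r = 0, m0 = L
      have hm0L' : m0 = L := by rw [hm0, if_pos h]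
      have hq1 : 1 ≤ q := by
        rcases Nat.eq_zero_or_pos q with h' | h'
        · exfalso; rw [h'] at hdiv; omega
        · exact h'
      obtain ⟨q', rfl⟩ : ∃ q', q = q' + 1 := ⟨q - 1, by omega⟩
      refine ⟨q', ?_, ?_⟩
      · rw [Nat.lt_succ_iff, Nat.le_div_iff_mul_le hL]
        have hexp : L * (q' + 1) = q' * L + L := by ring
        rw [hexp] at hdiv
        omega
      · have hexp : L * (q' + 1) = L + q' * L := by ring
        rw [hexp] at hdiv
        omega
    · -- r ≥ 1, m0 = r
      have hm0r : m0 = r := by rw [hm0, if_neg (by omega)]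
      refine ⟨q, ?_, ?_⟩
      · rw [Nat.lt_succ_iff, Nat.le_div_iff_mul_le hL]
        have hexp : L * q = q * L := by ring
        rw [hexp] at hdiv
        omega
      · have hexp : L * q = q * L := by ring
        rw [hexp] at hdiv
        omega
  · rintro ⟨k, hk, rfl⟩
    rw [Nat.lt_succ_iff, Nat.le_div_iff_mul_le hL] at hk
    refine ⟨⟨by omega, by omega⟩, ?_⟩
    rw [Nat.add_mul_mod_self_right, hm0mod]

lemma rpow_quarter {γ : ℝ} {nr : ℝ} (hn : 0 ≤ nr) :
    (nr / 4) ^ γ = nr ^ γ * 4 ^ (-γ) := by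
  rw [Real.div_rpow hn (by norm_num), Real.rpow_neg (by norm_num), div_eq_mul_inv]

lemma four_pow_le {γ : ℝ} (hγ : γ ≤ 1) : (4:ℝ) ^ γ ≤ 4 := by
  calc (4:ℝ) ^ γ ≤ 4 ^ (1:ℝ) := Real.rpow_le_rpow_of_exponent_le (by norm_num) hγ
    _ = 4 := Real.rpow_one 4

lemma max_mul_bound {α β nr : ℝ} (hβ : 0 < β) (hβα : β ≤ α) (hβ1 : β ≤ 1) (hn : 1 ≤ nr) :
    max ((1:ℝ) ^ (α-1)) (nr ^ (α-1)) * (nr/4) ^ (β-1) ≤ 4 * nr ^ (α-1) := by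
  have hn0 : (0:ℝ) < nr := by linarith
  have hq : (nr/4) ^ (β-1) ≤ 4 * nr ^ (β-1) := by
    rw [rpow_quarter hn0.le]
    have h4 : (4:ℝ) ^ (-(β-1)) ≤ 4 := four_pow_le (by linarith)
    have := Real.rpow_nonneg hn0.le (β-1)
    nlinarith
  have hv0 : (0:ℝ) ≤ (nr/4) ^ (β-1) := Real.rpow_nonneg (by linarith) _
  have hba : nr ^ (β-1) ≤ nr ^ (α-1) := Real.rpow_le_rpow_of_exponent_le hn (by linarith)
  have hbnn : (0:ℝ) ≤ nr ^ (β-1) := Real.rpow_nonneg hn0.le _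
  rw [Real.one_rpow]
  rcases le_total α 1 with hα1 | hα1
  · have hmax : max (1:ℝ) (nr ^ (α-1)) = 1 :=
      max_eq_left (Real.rpow_le_one_of_one_le_of_nonpos hn (by linarith))
    rw [hmax, one_mul]
    calc (nr/4) ^ (β-1) ≤ 4 * nr ^ (β-1) := hq
      _ ≤ 4 * nr ^ (α-1) := by linarith
  · have hmax : max (1:ℝ) (nr ^ (α-1)) = nr ^ (α-1) :=
      max_eq_right (Real.one_le_rpow hn (by linarith))
    rw [hmax]
    have hann : (0:ℝ) ≤ nr ^ (α-1) := Real.rpow_nonneg hn0.le _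
    calc nr ^ (α-1) * (nr/4) ^ (β-1) ≤ nr ^ (α-1) * (4 * nr ^ (β-1)) :=
          mul_le_mul_of_nonneg_left hq hann
      _ = 4 * (nr ^ (α-1) * nr ^ (β-1)) := by ring
      _ = 4 * nr ^ ((α-1) + (β-1)) := by rw [Real.rpow_add hn0]
      _ ≤ 4 * nr ^ (α-1) := by
          have := Real.rpow_le_rpow_of_exponent_le hn (show (α-1)+(β-1) ≤ α-1 by linarith)
          linarith

lemma bu2_bound {α nr : ℝ} (hn : 1 ≤ nr) :
    max ((nr/4) ^ (α-1)) (nr ^ (α-1)) ≤ max ((4:ℝ) ^ (1-α)) 1 * nr ^ (α-1) := by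
  have hn0 : (0:ℝ) ≤ nr := by linarith
  have hann : (0:ℝ) ≤ nr ^ (α-1) := Real.rpow_nonneg hn0 _
  apply max_le
  · rw [rpow_quarter hn0, show -(α-1) = 1-α by ring, mul_comm]
    exact mul_le_mul_of_nonneg_right (le_max_left _ _) hann
  · calc nr ^ (α-1) = 1 * nr ^ (α-1) := (one_mul _).symm
      _ ≤ max ((4:ℝ) ^ (1-α)) 1 * nr ^ (α-1) :=
          mul_le_mul_of_nonneg_right (le_max_right _ _) hann

lemma half_bound {α β nr : ℝ} (hβ : 0 < β) (hβα : β ≤ α) (hβ1 : β ≤ 1) (hn : 1 ≤ nr) :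
    (nr/2) ^ (β-1) ≤ 2 * nr ^ (α-1) := by
  have hn0 : (0:ℝ) < nr := by linarith
  have h2 : (nr/2) ^ (β-1) = nr ^ (β-1) * 2 ^ (-(β-1)) := by
    rw [Real.div_rpow hn0.le (by norm_num), Real.rpow_neg (by norm_num), div_eq_mul_inv]
  have h4 : (2:ℝ) ^ (-(β-1)) ≤ 2 := by
    calc (2:ℝ) ^ (-(β-1)) ≤ 2 ^ (1:ℝ) := Real.rpow_le_rpow_of_exponent_le (by norm_num) (by linarith)
      _ = 2 := Real.rpow_one 2
  have hba : nr ^ (β-1) ≤ nr ^ (α-1) := Real.rpow_le_rpow_of_exponent_le hn (by linarith)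
  have hbnn : (0:ℝ) ≤ nr ^ (β-1) := Real.rpow_nonneg hn0.le _
  rw [h2]
  nlinarith
set_option maxHeartbeats 1600000 in
theorem stmt_5 (L r : ℕ) (hL : 1 ≤ L) (hr : r < L)
    (α β : ℝ) (hβ : 0 < β) (hβα : β ≤ α) (hβ1 : β ≤ 1) :
    ∃ C : ℝ, 0 < C ∧ ∃ N : ℕ, ∀ n : ℕ, N ≤ n →
      |(∑ m ∈ (Finset.Ioo 0 n).filter (fun m => m % L = r),
          (m : ℝ) ^ (α - 1) * ((n : ℝ) - m) ^ (β - 1)) -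
        Real.Gamma α * Real.Gamma β / Real.Gamma (α + β) * (n : ℝ) ^ (α + β - 1) / L| ≤
        C * (n : ℝ) ^ (α - 1) := by
  have hα : 0 < α := lt_of_lt_of_le hβ hβα
  have hL0r : (0:ℝ) < L := by exact_mod_cast hL
  have hLr : (1:ℝ) ≤ L := by exact_mod_cast hL
  obtain ⟨cA, hcAdef⟩ : ∃ cA : ℝ, cA = max ((4:ℝ) ^ (1-α)) 1 := ⟨_, rfl⟩
  have hcA1 : (1:ℝ) ≤ cA := hcAdef ▸ le_max_right _ _
  have hLα : (0:ℝ) < (L:ℝ) ^ α / α := div_pos (Real.rpow_pos_of_pos hL0r _) hα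
  have hLβ : (0:ℝ) < (L:ℝ) ^ β / β := div_pos (Real.rpow_pos_of_pos hL0r _) hβ
  have hprodC : (0:ℝ) < cA * ((L:ℝ)^β/β) := mul_pos (lt_of_lt_of_le one_pos hcA1) hLβ
  refine ⟨8 + 3*cA + 2*((L:ℝ)^α/α) + cA*((L:ℝ)^β/β), by linarith, 16*(L+1), ?_⟩
  intro n hn
  -- basic nat setup
  obtain ⟨m0, hm0def⟩ : ∃ m0 : ℕ, m0 = if r = 0 then L else r := ⟨_, rfl⟩
  have hm0facts : 1 ≤ m0 ∧ m0 ≤ L := by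
    rcases Nat.eq_zero_or_pos r with h | h
    · rw [hm0def, h, if_pos rfl]; exact ⟨hL, le_rfl⟩
    · rw [hm0def, if_neg (by omega)]; exact ⟨h, hr.le⟩
  obtain ⟨hm01, hm0L⟩ := hm0facts
  obtain ⟨q, hqdef⟩ : ∃ q : ℕ, q = (n - 1 - m0) / L := ⟨_, rfl⟩
  obtain ⟨M, hMdef⟩ : ∃ M : ℕ, M = q / 2 := ⟨_, rfl⟩
  obtain ⟨s, hsdef⟩ : ∃ s : ℕ, s = (n - 1 - m0) % L := ⟨_, rfl⟩
  have hdiv : L * q + s = n - 1 - m0 := by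
    rw [hqdef, hsdef]; exact Nat.div_add_mod _ _
  have hsL : s < L := by rw [hsdef]; exact Nat.mod_lt _ (by omega)
  have hmn : m0 + L + 1 ≤ n := by omega
  obtain ⟨Y, hY⟩ : ∃ Y, L * q = Y := ⟨_, rfl⟩
  have hdiv' : Y + s = n - 1 - m0 := by rw [← hY]; exact hdiv
  have hnat : Y + s + m0 + 1 = n := by omega
  obtain ⟨e, hedef⟩ : ∃ e : ℕ, e = q % 2 := ⟨_, rfl⟩
  have hdM : 2 * M + e = q := by rw [hMdef, hedef]; exact Nat.div_add_mod _ _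
  have he1 : e ≤ 1 := by omega
  have hMq : M ≤ q := by omega
  have hq1 : 1 ≤ q := by
    rw [hqdef, Nat.le_div_iff_mul_le (by omega : 0 < L)]
    omega
  -- real setup
  have hnrN : (16:ℝ)*((L:ℝ)+1) ≤ (n:ℝ) := by exact_mod_cast hn
  have hnr1 : (1:ℝ) ≤ (n:ℝ) := by linarith
  have hnr0 : (0:ℝ) < (n:ℝ) := by linarith
  have hm01r : (1:ℝ) ≤ (m0:ℝ) := by exact_mod_cast hm01
  have hm0Lr : (m0:ℝ) ≤ (L:ℝ) := by exact_mod_cast hm0L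
  have hdivr : (L:ℝ)*(q:ℝ) + (s:ℝ) + (m0:ℝ) + 1 = (n:ℝ) := by
    have h1 : ((Y:ℝ)) + s + m0 + 1 = (n:ℝ) := by exact_mod_cast hnat
    have hYr : (Y:ℝ) = (L:ℝ)*(q:ℝ) := by exact_mod_cast hY.symm
    linarith [h1, hYr.symm.le, hYr.le]
  have hsr : (s:ℝ) ≤ (L:ℝ) - 1 := by
    have : (s:ℝ) + 1 ≤ (L:ℝ) := by exact_mod_cast hsL
    linarith
  have hsr0 : (0:ℝ) ≤ (s:ℝ) := Nat.cast_nonneg s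
  have hqMr : (q:ℝ) = 2*(M:ℝ) + (e:ℝ) := by exact_mod_cast hdM.symm
  have he1r : (e:ℝ) ≤ 1 := by exact_mod_cast he1
  have he0r : (0:ℝ) ≤ (e:ℝ) := Nat.cast_nonneg e
  -- points
  obtain ⟨p, hpdef⟩ : ∃ p : ℕ → ℝ, p = fun k : ℕ => (m0:ℝ) + (k:ℝ)*(L:ℝ) := ⟨_, rfl⟩
  have hp_succ : ∀ k, p (k+1) = p k + L := by
    intro k; simp only [hpdef]; push_cast; ring
  have hp_mono : ∀ j k : ℕ, j ≤ k → p j ≤ p k := by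
    intro j k hjk
    simp only [hpdef]
    have h1 : (j:ℝ) ≤ (k:ℝ) := by exact_mod_cast hjk
    have := mul_le_mul_of_nonneg_right h1 hL0r.le
    linarith
  have hp1 : ∀ k, (1:ℝ) ≤ p k := by
    intro k
    simp only [hpdef]
    have : (0:ℝ) ≤ (k:ℝ)*(L:ℝ) := by positivity
    linarith
  have hqLr : (q:ℝ)*(L:ℝ) = 2*((M:ℝ)*(L:ℝ)) + (e:ℝ)*(L:ℝ) := by rw [hqMr]; ring
  have heLr : (e:ℝ)*(L:ℝ) ≤ (L:ℝ) := by
    calc (e:ℝ)*(L:ℝ) ≤ 1*(L:ℝ) := mul_le_mul_of_nonneg_right he1r hL0r.le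
      _ = (L:ℝ) := one_mul _
  have heL0 : (0:ℝ) ≤ (e:ℝ)*(L:ℝ) := mul_nonneg he0r hL0r.le
  have hlast_le : p q ≤ (n:ℝ) - 1 := by
    simp only [hpdef]; linarith [hdivr, hsr0]
  have hlast_ge : (n:ℝ) - (L:ℝ) ≤ p q := by
    simp only [hpdef]; linarith [hdivr, hsr]
  have hpM_lb : (n:ℝ)/4 ≤ p M := by
    simp only [hpdef]; linarith [hdivr, hqLr, heLr, hsr, hnrN, hm01r]
  have hpM_ub : p M ≤ 3*(n:ℝ)/4 := by
    simp only [hpdef]; linarith [hdivr, hqLr, heL0, hsr0, hnrN, hm0Lr]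
  have hpk_le : ∀ k, k ≤ q → p k ≤ (n:ℝ) - 1 := fun k hk => (hp_mono k q hk).trans hlast_le
  have hp0L : p 0 ≤ (L:ℝ) := by
    simp only [hpdef]; push_cast; linarith
  -- function
  obtain ⟨F, hFdef⟩ : ∃ F : ℝ → ℝ, F = fun t : ℝ => t ^ (α-1) * ((n:ℝ) - t) ^ (β-1) := ⟨_, rfl⟩
  -- sum rewriting
  have himg := AP_filter hL hr hm0def (by omega : m0 + L + 1 ≤ n)
  have hKq : (n - 1 - m0) / L + 1 = q + 1 := by omega
  rw [hKq] at himg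
  have hinj : ∀ x ∈ Finset.range (q+1), ∀ y ∈ Finset.range (q+1),
      m0 + x * L = m0 + y * L → x = y := by
    intro x _ y _ h
    have : x * L = y * L := by omega
    exact Nat.eq_of_mul_eq_mul_right (by omega) this
  have hS : (∑ m ∈ (Finset.Ioo 0 n).filter (fun m => m % L = r),
      (m : ℝ) ^ (α - 1) * ((n : ℝ) - m) ^ (β - 1)) = ∑ k ∈ Finset.range (q+1), F (p k) := by
    rw [himg, Finset.sum_image hinj]
    apply Finset.sum_congr rfl
    intro k _
    simp only [hFdef, hpdef]
    push_cast
    ring_nf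
  -- integrability
  have hInt : ∀ a b : ℝ, 1 ≤ a → a ≤ b → b ≤ (n:ℝ) - 1 → IntervalIntegrable F volume a b := by
    intro a b h1 hab h2
    rw [hFdef]
    apply ContinuousOn.intervalIntegrable
    apply contF (n := (n:ℝ))
    intro x hx
    rw [Set.uIcc_of_le hab] at hx
    exact ⟨by linarith [hx.1], by linarith [hx.2]⟩
  have hp0_lt : p 0 < (n:ℝ) := by linarith [hpk_le 0 (by omega)]
  have hp00 : (0:ℝ) < p 0 := by linarith [hp1 0]
  have hI0 : IntervalIntegrable F volume 0 (p 0) := by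
    rw [hFdef]
    have hIu : IntervalIntegrable (fun t : ℝ => t ^ (α-1)) volume 0 (p 0) :=
      intervalIntegral.intervalIntegrable_rpow' (by linarith)
    apply hIu.mul_continuousOn
    apply (continuousOn_const.sub continuousOn_id).rpow_const
    intro x hx
    rw [Set.uIcc_of_le hp00.le] at hx
    left
    have := hx.2
    intro hcon; simp only [Pi.sub_apply, id] at hcon; linarith
  have hImidall : IntervalIntegrable F volume (p 0) (p q) :=
    hInt _ _ (hp1 0) (hp_mono 0 q (by omega)) hlast_le
  have hpq0 : (0:ℝ) < p q := by linarith [hp1 q]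
  have hpq_lt : p q < (n:ℝ) := by linarith [hpk_le q le_rfl]
  have hI1 : IntervalIntegrable F volume (p q) (n:ℝ) := by
    rw [hFdef]
    have hIv : IntervalIntegrable (fun t : ℝ => ((n:ℝ) - t) ^ (β-1)) volume (p q) (n:ℝ) := by
      have h0 : IntervalIntegrable (fun t : ℝ => t ^ (β-1)) volume 0 ((n:ℝ) - p q) :=
        intervalIntegral.intervalIntegrable_rpow' (by linarith)
      exact (IntervalIntegrable.symm (by simpa using h0.comp_sub_left (n:ℝ)))
    apply hIv.continuousOn_mul
    apply continuousOn_id.rpow_const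
    intro x hx
    rw [Set.uIcc_of_le hpq_lt.le] at hx
    left
    simp only [id]
    have := hx.1
    intro hcon; linarith
  have hmid : (∑ k ∈ Finset.range q, ∫ t in (p k)..(p (k+1)), F t)
      = ∫ t in (p 0)..(p q), F t := by
    apply intervalIntegral.sum_integral_adjacent_intervals
    intro k hk
    exact hInt _ _ (hp1 k) (by linarith [hp_succ k]) (hpk_le (k+1) (by omega))
  obtain ⟨T0, hT0def⟩ : ∃ T0 : ℝ, T0 = ∫ t in (0:ℝ)..(p 0), F t := ⟨_, rfl⟩
  obtain ⟨T1, hT1def⟩ : ∃ T1 : ℝ, T1 = ∫ t in (p q)..(n:ℝ), F t := ⟨_, rfl⟩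
  have hsplit1 : T0 + (∫ t in (p 0)..(p q), F t) = ∫ t in (0:ℝ)..(p q), F t := by
    rw [hT0def]
    exact intervalIntegral.integral_add_adjacent_intervals hI0 hImidall
  have hsplit2 : (∫ t in (0:ℝ)..(p q), F t) + T1 = ∫ t in (0:ℝ)..(n:ℝ), F t := by
    rw [hT1def]
    exact intervalIntegral.integral_add_adjacent_intervals (hI0.trans hImidall) hI1
  have hbeta : (∫ t in (0:ℝ)..(n:ℝ), F t)
      = Real.Gamma α * Real.Gamma β / Real.Gamma (α + β) * (n:ℝ) ^ (α + β - 1) := by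
    rw [hFdef]
    exact real_beta_scaled hα hβ hnr0
  -- u, v, D
  obtain ⟨u, hudef⟩ : ∃ u : ℕ → ℝ, u = fun k => (p k) ^ (α-1) := ⟨_, rfl⟩
  obtain ⟨v, hvdef⟩ : ∃ v : ℕ → ℝ, v = fun k => ((n:ℝ) - p k) ^ (β-1) := ⟨_, rfl⟩
  obtain ⟨D, hDdef⟩ : ∃ D : ℕ → ℝ,
      D = fun k => u k * (v (k+1) - v k) + |u (k+1) - u k| * v (k+1) := ⟨_, rfl⟩
  -- key equation
  have heq : (∑ k ∈ Finset.range (q+1), F (p k))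
      - Real.Gamma α * Real.Gamma β / Real.Gamma (α + β) * (n:ℝ) ^ (α + β - 1) / L
      = (∑ k ∈ Finset.range q, (F (p k) - (∫ t in (p k)..(p (k+1)), F t) / L))
        + F (p q) - T0/(L:ℝ) - T1/(L:ℝ) := by
    rw [← hbeta, ← hsplit2, ← hsplit1, ← hmid, Finset.sum_range_succ,
      Finset.sum_sub_distrib, ← Finset.sum_div]
    ring
  -- per-interval bound
  have hLne : (L:ℝ) ≠ 0 := by linarith
  have hE : ∀ k, k < q → |F (p k) - (∫ t in (p k)..(p (k+1)), F t) / L| ≤ D k := by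
    intro k hk
    have hab : p k + (L:ℝ) ≤ (n:ℝ) - 1 := by
      rw [← hp_succ k]; exact hpk_le (k+1) (by omega)
    have hosc := interval_osc (α := α) (β := β) (n := (n:ℝ)) hβ1 (hp1 k) hL0r hab
    rw [show p k + (L:ℝ) = p (k+1) from (hp_succ k).symm] at hosc
    have heq2 : ((L:ℝ) * F (p k) - ∫ t in (p k)..(p (k+1)), F t) / L
        = F (p k) - (∫ t in (p k)..(p (k+1)), F t) / L := by
      rw [sub_div, mul_div_cancel_left₀ _ hLne]
    rw [← heq2, abs_div, abs_of_pos hL0r, div_le_iff₀ hL0r]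
    calc |(L:ℝ) * F (p k) - ∫ t in (p k)..(p (k+1)), F t|
        ≤ (L:ℝ) * D k := by
          simp only [hDdef, hudef, hvdef, hFdef]
          exact hosc
      _ = D k * L := by ring
  -- bounds setup
  obtain ⟨Bu1, hBu1def⟩ : ∃ Bu1 : ℝ, Bu1 = max ((1:ℝ) ^ (α-1)) ((n:ℝ) ^ (α-1)) := ⟨_, rfl⟩
  obtain ⟨Bv1, hBv1def⟩ : ∃ Bv1 : ℝ, Bv1 = ((n:ℝ)/4) ^ (β-1) := ⟨_, rfl⟩
  obtain ⟨Bu2, hBu2def⟩ : ∃ Bu2 : ℝ, Bu2 = max (((n:ℝ)/4) ^ (α-1)) ((n:ℝ) ^ (α-1)) := ⟨_, rfl⟩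
  have hum : (∀ k : ℕ, u k ≤ u (k+1)) ∨ (∀ k : ℕ, u (k+1) ≤ u k) := by
    simp only [hudef]
    rcases le_total α 1 with h | h
    · right; intro k
      exact Real.rpow_le_rpow_of_nonpos (by linarith [hp1 k]) (by linarith [hp_succ k]) (by linarith)
    · left; intro k
      exact Real.rpow_le_rpow (by linarith [hp1 k]) (by linarith [hp_succ k]) (by linarith)
  have hvm : ∀ k, k < q → v k ≤ v (k+1) := by
    intro k hk
    simp only [hvdef]
    apply Real.rpow_le_rpow_of_nonpos
    · have := hpk_le (k+1) (by omega); linarith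
    · linarith [hp_succ k, hL0r]
    · linarith
  have hu0 : ∀ k, 0 ≤ u k := by
    intro k; simp only [hudef]; exact Real.rpow_nonneg (by linarith [hp1 k]) _
  have hv0 : ∀ k, k ≤ q → 0 ≤ v k := by
    intro k hk; simp only [hvdef]; exact Real.rpow_nonneg (by linarith [hpk_le k hk]) _
  have huB1 : ∀ k, k ≤ q → u k ≤ Bu1 := by
    intro k hk
    simp only [hudef, hBu1def]
    exact rpow_bound_between one_pos (hp1 k) (by linarith [hpk_le k hk])
  have huB2 : ∀ k, M ≤ k → k ≤ q → u k ≤ Bu2 := by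
    intro k hk hk'
    simp only [hudef, hBu2def]
    have h1 : p M ≤ p k := hp_mono M k hk
    exact rpow_bound_between (by linarith : (0:ℝ) < (n:ℝ)/4) (by linarith)
      (by linarith [hpk_le k hk'])
  have hvB1 : ∀ k, k ≤ M → v k ≤ Bv1 := by
    intro k hk
    simp only [hvdef, hBv1def]
    have h1 : p k ≤ p M := hp_mono k M hk
    exact Real.rpow_le_rpow_of_nonpos (by linarith) (by linarith) (by linarith)
  have hvB2 : ∀ k, k ≤ q → v k ≤ 1 := by
    intro k hk
    simp only [hvdef]
    exact Real.rpow_le_one_of_one_le_of_nonpos (by linarith [hpk_le k hk]) (by linarith)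
  have hsum1 : ∑ k ∈ Finset.Ico 0 M, D k ≤ 2 * (Bu1 * Bv1) := by
    simp only [hDdef]
    apply sum_osc (Nat.zero_le M)
    · intro k _ hk; exact hvm k (by omega)
    · rcases hum with h | h
      · left; intro k _ _; exact h k
      · right; intro k _ _; exact h k
    · intro k _ _; exact hu0 k
    · intro k _ hk; exact hv0 k (by omega)
    · intro k _ hk; exact huB1 k (by omega)
    · intro k _ hk; exact hvB1 k hk
  have hsum2 : ∑ k ∈ Finset.Ico M q, D k ≤ 2 * (Bu2 * 1) := by
    simp only [hDdef]
    apply sum_osc hMq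
    · intro k _ hk; exact hvm k hk
    · rcases hum with h | h
      · left; intro k _ _; exact h k
      · right; intro k _ _; exact h k
    · intro k _ _; exact hu0 k
    · intro k _ hk; exact hv0 k hk
    · intro k hk hk'; exact huB2 k hk hk'
    · intro k _ hk; exact hvB2 k hk
  have hDsplit : ∑ k ∈ Finset.range q, D k
      = (∑ k ∈ Finset.Ico 0 M, D k) + ∑ k ∈ Finset.Ico M q, D k := by
    rw [Finset.range_eq_Ico, ← Finset.sum_Ico_consecutive _ (Nat.zero_le M) hMq]
  have hBu1Bv1 : Bu1 * Bv1 ≤ 4 * (n:ℝ) ^ (α-1) := by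
    rw [hBu1def, hBv1def]; exact max_mul_bound hβ hβα hβ1 hnr1
  have hBu2 : Bu2 ≤ cA * (n:ℝ) ^ (α-1) := by
    rw [hBu2def, hcAdef]; exact bu2_bound hnr1
  have hnralpha : (0:ℝ) ≤ (n:ℝ) ^ (α-1) := Real.rpow_nonneg hnr0.le _
  have hG : F (p q) ≤ cA * (n:ℝ) ^ (α-1) := by
    have hu' : (p q) ^ (α-1) ≤ Bu2 := by
      have := huB2 q hMq le_rfl
      simpa only [hudef] using this
    have hv' : ((n:ℝ) - p q) ^ (β-1) ≤ 1 :=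
      Real.rpow_le_one_of_one_le_of_nonpos (by linarith) (by linarith)
    have hv'' : (0:ℝ) ≤ ((n:ℝ) - p q) ^ (β-1) := Real.rpow_nonneg (by linarith) _
    calc F (p q) = (p q) ^ (α-1) * ((n:ℝ) - p q) ^ (β-1) := by rw [hFdef]
      _ ≤ Bu2 * 1 := mul_le_mul hu' hv' hv'' (le_trans (Real.rpow_nonneg hpq0.le _) hu')
      _ = Bu2 := mul_one _
      _ ≤ cA * (n:ℝ) ^ (α-1) := hBu2
  have hFq0 : 0 ≤ F (p q) := by
    rw [hFdef]
    exact mul_nonneg (Real.rpow_nonneg hpq0.le _) (Real.rpow_nonneg (by linarith) _)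
  have hT0b : T0 ≤ 2 * (n:ℝ) ^ (α-1) * ((L:ℝ)^α/α) := by
    have h1 : T0 ≤ ((n:ℝ) - p 0) ^ (β-1) * ((p 0)^α/α) := by
      rw [hT0def, hFdef]
      exact tail0 hα hβ1 hp00 hp0_lt
    have h2 : ((n:ℝ) - p 0) ^ (β-1) ≤ ((n:ℝ)/2) ^ (β-1) := by
      apply Real.rpow_le_rpow_of_nonpos (by linarith) (by linarith) (by linarith)
    have h3 : ((n:ℝ)/2) ^ (β-1) ≤ 2 * (n:ℝ) ^ (α-1) := half_bound hβ hβα hβ1 hnr1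
    have h4 : (p 0)^α ≤ (L:ℝ)^α := Real.rpow_le_rpow hp00.le hp0L hα.le
    have h5 : (0:ℝ) ≤ (p 0)^α/α := div_nonneg (Real.rpow_nonneg hp00.le _) hα.le
    calc T0 ≤ ((n:ℝ) - p 0) ^ (β-1) * ((p 0)^α/α) := h1
      _ ≤ (2 * (n:ℝ) ^ (α-1)) * ((p 0)^α/α) :=
          mul_le_mul_of_nonneg_right (h2.trans h3) h5
      _ ≤ (2 * (n:ℝ) ^ (α-1)) * ((L:ℝ)^α/α) := by
          apply mul_le_mul_of_nonneg_left _ (by positivity)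
          exact div_le_div_of_nonneg_right h4 hα.le
      _ = 2 * (n:ℝ) ^ (α-1) * ((L:ℝ)^α/α) := by ring
  have hT00 : 0 ≤ T0 := by
    rw [hT0def]
    apply intervalIntegral.integral_nonneg hp00.le
    intro x hx
    rw [hFdef]
    exact mul_nonneg (Real.rpow_nonneg hx.1 _)
      (Real.rpow_nonneg (by linarith [hx.2]) _)
  have hT1b : T1 ≤ cA * (n:ℝ) ^ (α-1) * ((L:ℝ)^β/β) := by
    have hBu20 : (0:ℝ) ≤ Bu2 := by
      rw [hBu2def]
      exact le_trans (Real.rpow_nonneg hnr0.le (α-1)) (le_max_right _ _)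
    have hU : ∀ t ∈ Set.Icc (p q) (n:ℝ), t ^ (α-1) ≤ Bu2 := by
      intro t ht
      rw [hBu2def]
      exact rpow_bound_between (by linarith : (0:ℝ) < (n:ℝ)/4)
        (by linarith [ht.1, hlast_ge, hnrN]) ht.2
    have h1 : T1 ≤ Bu2 * (((n:ℝ) - p q)^β/β) := by
      rw [hT1def, hFdef]
      exact tail1 hβ hpq0 hpq_lt hU
    have h2 : ((n:ℝ) - p q)^β ≤ (L:ℝ)^β :=
      Real.rpow_le_rpow (by linarith) (by linarith [hlast_ge]) hβ.le
    calc T1 ≤ Bu2 * (((n:ℝ) - p q)^β/β) := h1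
      _ ≤ Bu2 * ((L:ℝ)^β/β) :=
          mul_le_mul_of_nonneg_left (div_le_div_of_nonneg_right h2 hβ.le) hBu20
      _ ≤ (cA * (n:ℝ) ^ (α-1)) * ((L:ℝ)^β/β) :=
          mul_le_mul_of_nonneg_right hBu2 hLβ.le
      _ = cA * (n:ℝ) ^ (α-1) * ((L:ℝ)^β/β) := by ring
  have hT10 : 0 ≤ T1 := by
    rw [hT1def]
    apply intervalIntegral.integral_nonneg hpq_lt.le
    intro x hx
    rw [hFdef]
    exact mul_nonneg (Real.rpow_nonneg (by linarith [hx.1, hpq0.le]) _)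
      (Real.rpow_nonneg (by linarith [hx.2]) _)
  have hEsum : |∑ k ∈ Finset.range q, (F (p k) - (∫ t in (p k)..(p (k+1)), F t) / L)|
      ≤ ∑ k ∈ Finset.range q, D k :=
    (Finset.abs_sum_le_sum_abs _ _).trans
      (Finset.sum_le_sum fun k hk => hE k (Finset.mem_range.mp hk))
  have hDtot : ∑ k ∈ Finset.range q, D k
      ≤ 8 * (n:ℝ) ^ (α-1) + 2 * (cA * (n:ℝ) ^ (α-1)) := by
    rw [hDsplit]
    linarith [hsum1, hsum2, hBu1Bv1, hBu2]
  obtain ⟨hEl, hEu⟩ := abs_le.mp hEsum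
  have hdiv0 : 0 ≤ T0 / (L:ℝ) := div_nonneg hT00 (by linarith)
  have hdiv1 : 0 ≤ T1 / (L:ℝ) := div_nonneg hT10 (by linarith)
  have hdivle0 : T0 / (L:ℝ) ≤ T0 := div_le_self hT00 hLr
  have hdivle1 : T1 / (L:ℝ) ≤ T1 := div_le_self hT10 hLr
  have hcAnr : (0:ℝ) ≤ cA * (n:ℝ) ^ (α-1) := mul_nonneg (by linarith) hnralpha
  have haux1 : (0:ℝ) ≤ ((L:ℝ)^α/α) * (n:ℝ) ^ (α-1) := mul_nonneg hLα.le hnralpha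
  have haux2 : (0:ℝ) ≤ cA * ((L:ℝ)^β/β) * (n:ℝ) ^ (α-1) :=
    mul_nonneg (mul_nonneg (by linarith) hLβ.le) hnralpha
  rw [hS, heq, abs_le]
  constructor
  · linarith
  · linarith
end

section
/- (Disjointness lemma) Let (Ω, Pr) be a probability space arising as a product of independent events, let E_1, E_2, …, E_n be events each of which is the conjunction of a finite set S_i of independent atomic events, and define a family {E_i : i ∈ J} to be disjoint if the index sets S_i for i ∈ J are pairwise disjoint. Then for every integer k ≥ 1, the probability that there exists a disjoint subfamily of size k is at most (Σ_i Pr(E_i))^k / k!. -/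
open MeasureTheory ProbabilityTheory

open Finset in
lemma aux_comb_stmt10 {n k : ℕ} (p : Fin n → ℝ) (hp : ∀ i, 0 ≤ p i) :
    ∑ J ∈ Finset.powersetCard k Finset.univ, ∏ i ∈ J, p i ≤
      (∑ i, p i) ^ k / k.factorial := by
  rw [le_div_iff₀ (by positivity : (0:ℝ) < k.factorial)]
  classical
  set e : Finset (Fin n) → (Fin n → ℕ) := fun J i => if i ∈ J then 1 else 0 with he
  have hinj : ∀ J₁ ∈ powersetCard k (univ : Finset (Fin n)), ∀ J₂ ∈ powersetCard k univ,
      e J₁ = e J₂ → J₁ = J₂ := by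
    intro J₁ _ J₂ _ h
    ext i
    have := congrFun h i
    simp only [e] at this
    by_cases h1 : i ∈ J₁ <;> by_cases h2 : i ∈ J₂ <;> simp_all
  calc (∑ J ∈ powersetCard k (univ : Finset (Fin n)), ∏ i ∈ J, p i) * k.factorial
      = ∑ J ∈ powersetCard k (univ : Finset (Fin n)),
          (Nat.multinomial univ (e J) : ℝ) * ∏ i, p i ^ e J i := by
        rw [Finset.sum_mul]
        refine Finset.sum_congr rfl fun J hJ => ?_
        have hcard : (J.card = k) := (Finset.mem_powersetCard.1 hJ).2
        have hsum : ∑ i, e J i = k := by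
          simp [e, Finset.sum_ite_mem, hcard]
        have hmult : Nat.multinomial univ (e J) = k.factorial := by
          have := Nat.multinomial_spec (univ : Finset (Fin n)) (e J)
          have hprod : ∏ i, (e J i).factorial = 1 := by
            apply Finset.prod_eq_one
            intro i _
            by_cases h : i ∈ J <;> simp [e, h]
          rw [hprod, one_mul, hsum] at this
          exact this
        have hprodp : ∏ i, p i ^ e J i = ∏ i ∈ J, p i := by
          rw [← Finset.prod_filter_mul_prod_filter_not univ (· ∈ J)]
          have h1 : ∏ i ∈ univ.filter (· ∈ J), p i ^ e J i = ∏ i ∈ J, p i := by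
            rw [Finset.filter_mem_eq_inter, Finset.univ_inter]
            exact Finset.prod_congr rfl fun i hi => by simp [e, hi]
          have h2 : ∏ i ∈ univ.filter (· ∉ J), p i ^ e J i = 1 :=
            Finset.prod_eq_one fun i hi => by simp [e, (Finset.mem_filter.1 hi).2]
          rw [h1, h2, mul_one]
        rw [hmult, hprodp, mul_comm]
    _ = ∑ m ∈ (powersetCard k (univ : Finset (Fin n))).image e,
          (Nat.multinomial univ m : ℝ) * ∏ i, p i ^ m i := by
        rw [Finset.sum_image hinj]
    _ ≤ ∑ m ∈ piAntidiag (univ : Finset (Fin n)) k,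
          (Nat.multinomial univ m : ℝ) * ∏ i, p i ^ m i := by
        apply Finset.sum_le_sum_of_subset_of_nonneg
        · intro m hm
          obtain ⟨J, hJ, rfl⟩ := Finset.mem_image.1 hm
          rw [Finset.mem_piAntidiag]
          refine ⟨?_, fun i hi => Finset.mem_univ i⟩
          have hcard : (J.card = k) := (Finset.mem_powersetCard.1 hJ).2
          simp [e, Finset.sum_ite_mem, hcard]
        · intro m _ _
          have : (0:ℝ) ≤ ∏ i, p i ^ m i := Finset.prod_nonneg fun i _ => pow_nonneg (hp i) _
          positivity
    _ = (∑ i, p i) ^ k := (Finset.sum_pow_eq_sum_piAntidiag univ p k).symm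

theorem stmt_10 {Ω : Type*} [MeasurableSpace Ω] (μ : Measure Ω) [IsProbabilityMeasure μ]
    {ι : Type*} (A : ι → Set Ω) (hA : ∀ i, MeasurableSet (A i)) (hind : iIndepSet A μ)
    (n : ℕ) (S : Fin n → Finset ι) (E : Fin n → Set Ω)
    (hE : ∀ i, E i = ⋂ j ∈ S i, A j) (k : ℕ) (hk : 1 ≤ k) :
    (μ {x | ∃ J : Finset (Fin n), J.card = k ∧
        (∀ i ∈ J, ∀ j ∈ J, i ≠ j → Disjoint (S i) (S j)) ∧ ∀ i ∈ J, x ∈ E i}).toReal ≤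
      (∑ i, (μ (E i)).toReal) ^ k / k.factorial := by
  classical
  set T : Finset (Finset (Fin n)) := (Finset.powersetCard k Finset.univ).filter
    (fun J => ∀ i ∈ J, ∀ j ∈ J, i ≠ j → Disjoint (S i) (S j)) with hT
  -- Step 1: the event is contained in a finite union
  have hsub : {x | ∃ J : Finset (Fin n), J.card = k ∧
      (∀ i ∈ J, ∀ j ∈ J, i ≠ j → Disjoint (S i) (S j)) ∧ ∀ i ∈ J, x ∈ E i} ⊆
      ⋃ J ∈ T, ⋂ i ∈ J, E i := by
    rintro x ⟨J, h1, h2, h3⟩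
    exact Set.mem_biUnion
      (Finset.mem_filter.2 ⟨Finset.mem_powersetCard_univ.2 h1, h2⟩)
      (Set.mem_iInter₂.2 h3)
  -- Step 2: the measure of each intersection is a product
  have key : ∀ J ∈ T, μ (⋂ i ∈ J, E i) = ∏ i ∈ J, μ (E i) := by
    intro J hJ
    obtain ⟨hJc, hJd⟩ := Finset.mem_filter.1 hJ
    have hdisj : (↑J : Set (Fin n)).PairwiseDisjoint S :=
      fun i hi j hj hij => hJd i hi j hj hij
    have h1 : (⋂ i ∈ J, E i) = ⋂ j ∈ J.biUnion S, A j := by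
      simp only [hE]
      ext x
      simp only [Set.mem_iInter, Finset.mem_biUnion]
      constructor
      · rintro h j ⟨i, hi, hj⟩
        exact h i hi j hj
      · intro h i hi j hj
        exact h j ⟨i, hi, hj⟩
    rw [h1, hind.meas_biInter, Finset.prod_biUnion hdisj]
    exact Finset.prod_congr rfl fun i _ => by rw [hE i, hind.meas_biInter]
  -- Step 3: union bound
  have hle1 : μ {x | ∃ J : Finset (Fin n), J.card = k ∧
      (∀ i ∈ J, ∀ j ∈ J, i ≠ j → Disjoint (S i) (S j)) ∧ ∀ i ∈ J, x ∈ E i} ≤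
      ∑ J ∈ T, ∏ i ∈ J, μ (E i) :=
    calc μ _ ≤ μ (⋃ J ∈ T, ⋂ i ∈ J, E i) := measure_mono hsub
    _ ≤ ∑ J ∈ T, μ (⋂ i ∈ J, E i) := measure_biUnion_finset_le T _
    _ = ∑ J ∈ T, ∏ i ∈ J, μ (E i) := Finset.sum_congr rfl key
  -- Step 4: pass to real numbers
  have hfin : ∀ J : Finset (Fin n), ∏ i ∈ J, μ (E i) ≠ ⊤ := by
    intro J
    refine (ENNReal.prod_lt_top fun i _ => ?_).ne
    exact (measure_lt_top μ _)
  have hsum_ne : (∑ J ∈ T, ∏ i ∈ J, μ (E i)) ≠ ⊤ :=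
    (ENNReal.sum_lt_top.2 fun J _ => (hfin J).lt_top).ne
  calc (μ {x | ∃ J : Finset (Fin n), J.card = k ∧
      (∀ i ∈ J, ∀ j ∈ J, i ≠ j → Disjoint (S i) (S j)) ∧ ∀ i ∈ J, x ∈ E i}).toReal
      ≤ (∑ J ∈ T, ∏ i ∈ J, μ (E i)).toReal := ENNReal.toReal_mono hsum_ne hle1
    _ = ∑ J ∈ T, ∏ i ∈ J, (μ (E i)).toReal := by
        rw [ENNReal.toReal_sum fun J _ => hfin J]
        exact Finset.sum_congr rfl fun J _ => ENNReal.toReal_prod _ _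
    _ ≤ ∑ J ∈ Finset.powersetCard k Finset.univ, ∏ i ∈ J, (μ (E i)).toReal := by
        apply Finset.sum_le_sum_of_subset_of_nonneg (Finset.filter_subset _ _)
        intro J _ _
        exact Finset.prod_nonneg fun i _ => ENNReal.toReal_nonneg
    _ ≤ (∑ i, (μ (E i)).toReal) ^ k / k.factorial :=
        aux_comb_stmt10 _ fun i => ENNReal.toReal_nonneg
end

section
/- (Kochen–Stone) Let {E_n} be events in a probability space with Σ_n Pr(E_n) = ∞. Then Pr(E_n occurs for infinitely many n) ≥ limsup_{N→∞} (Σ_{1≤n,m≤N} Pr(E_n)Pr(E_m)) / (Σ_{1≤n,m≤N} Pr(E_n ∧ E_m)). -/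
open MeasureTheory Filter Topology
open scoped ENNReal


lemma kochen_cs {Ω : Type*} [MeasurableSpace Ω] (μ : Measure Ω) [IsProbabilityMeasure μ]
    (E : ℕ → Set Ω) (hE : ∀ n, MeasurableSet (E n)) (s : Finset ℕ) :
    (∑ n ∈ s, (μ (E n)).toReal) ^ 2 ≤
      (μ (⋃ n ∈ s, E n)).toReal * ∑ n ∈ s, ∑ m ∈ s, (μ (E n ∩ E m)).toReal := by
  set f : Ω → ℝ≥0∞ := fun x => ∑ n ∈ s, (E n).indicator 1 x with hf
  set g : Ω → ℝ≥0∞ := (⋃ n ∈ s, E n).indicator 1 with hg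
  have hfm : Measurable f := by
    apply Finset.measurable_sum
    intro n _
    exact (measurable_one.indicator (hE n))
  have hU : MeasurableSet (⋃ n ∈ s, E n) := s.measurableSet_biUnion (fun n _ => hE n)
  have hI1 : ∫⁻ x, f x ∂μ = ∑ n ∈ s, μ (E n) := by
    rw [lintegral_finset_sum _ (fun n _ => measurable_one.indicator (hE n))]
    exact Finset.sum_congr rfl fun n _ => lintegral_indicator_one (hE n)
  have hsq : ∀ x, f x ^ (2:ℝ) = ∑ n ∈ s, ∑ m ∈ s, (E n ∩ E m).indicator 1 x := by
    intro x
    rw [ENNReal.rpow_two, sq, hf, Finset.sum_mul_sum]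
    refine Finset.sum_congr rfl fun n _ => Finset.sum_congr rfl fun m _ => ?_
    rw [← Set.inter_indicator_mul]
    by_cases hx : x ∈ E n ∩ E m <;> simp [hx]
  have hI2 : ∫⁻ x, f x ^ (2:ℝ) ∂μ = ∑ n ∈ s, ∑ m ∈ s, μ (E n ∩ E m) := by
    simp only [hsq]
    rw [lintegral_finset_sum _ (fun n _ => Finset.measurable_sum _
      (fun m _ => measurable_one.indicator ((hE n).inter (hE m))))]
    refine Finset.sum_congr rfl fun n _ => ?_
    rw [lintegral_finset_sum _ (fun m _ => measurable_one.indicator ((hE n).inter (hE m)))]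
    exact Finset.sum_congr rfl fun m _ => lintegral_indicator_one ((hE n).inter (hE m))
  have hfg : ∀ x, f x = (f * g) x := by
    intro x
    by_cases hx : x ∈ ⋃ n ∈ s, E n
    · simp [hg, Set.indicator_of_mem hx]
    · have h0 : f x = 0 := by
        rw [hf]
        refine Finset.sum_eq_zero fun n hn => ?_
        have : x ∉ E n := fun h => hx (Set.mem_biUnion hn h)
        simp [Set.indicator_of_notMem this]
      simp [h0]
  have hconj : Real.HolderConjugate 2 2 := Real.HolderConjugate.two_two
  have hCS := ENNReal.lintegral_mul_le_Lp_mul_Lq μ hconj hfm.aemeasurable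
    ((measurable_one.indicator hU).aemeasurable)
  have hIU : ∫⁻ x, g x ^ (2:ℝ) ∂μ = μ (⋃ n ∈ s, E n) := by
    have h : ∀ x, g x ^ (2:ℝ) = g x := by
      intro x
      rw [hg]
      by_cases hx : x ∈ ⋃ n ∈ s, E n <;> simp [hx]
    simp only [h]; simp only [hg]
    exact lintegral_indicator_one hU
  have hrt : ∀ a : ℝ≥0∞, (a ^ (1/2 : ℝ)) ^ 2 = a := by
    intro a
    rw [← ENNReal.rpow_natCast (a ^ (1/2 : ℝ)) 2, ← ENNReal.rpow_mul]
    norm_num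
  have key : (∑ n ∈ s, μ (E n)) ^ 2 ≤
      (∑ n ∈ s, ∑ m ∈ s, μ (E n ∩ E m)) * μ (⋃ n ∈ s, E n) := by
    have h1 : ∫⁻ x, f x ∂μ ≤ (∑ n ∈ s, ∑ m ∈ s, μ (E n ∩ E m)) ^ (1/2 : ℝ) *
        (μ (⋃ n ∈ s, E n)) ^ (1/2 : ℝ) := by
      calc ∫⁻ x, f x ∂μ = ∫⁻ x, (f * g) x ∂μ := lintegral_congr hfg
        _ ≤ _ := by rw [← hI2, ← hIU]; exact hCS
    rw [← hI1]
    calc (∫⁻ x, f x ∂μ) ^ 2 ≤ ((∑ n ∈ s, ∑ m ∈ s, μ (E n ∩ E m)) ^ (1/2 : ℝ) *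
        (μ (⋃ n ∈ s, E n)) ^ (1/2 : ℝ)) ^ 2 := pow_le_pow_left' h1 2
      _ = _ := by rw [mul_pow, hrt, hrt]
  -- pass to toReal
  have hne : ∀ A : Set Ω, μ A ≠ ∞ := fun A => measure_ne_top μ A
  have hfin : (∑ n ∈ s, ∑ m ∈ s, μ (E n ∩ E m)) * μ (⋃ n ∈ s, E n) ≠ ∞ := by
    apply ENNReal.mul_ne_top _ (hne _)
    exact (ENNReal.sum_ne_top.2 fun n _ => ENNReal.sum_ne_top.2 fun m _ => hne _)
  have := ENNReal.toReal_mono hfin key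
  rw [ENNReal.toReal_pow, ENNReal.toReal_mul, ENNReal.toReal_sum
    (fun n _ => ENNReal.sum_ne_top.2 fun m _ => hne _)] at this
  simp only [ENNReal.toReal_sum (fun m _ => hne (E _ ∩ E m))] at this
  calc (∑ n ∈ s, (μ (E n)).toReal) ^ 2 = ((∑ n ∈ s, μ (E n)).toReal) ^ 2 := by
        rw [ENNReal.toReal_sum (fun n _ => hne _)]
    _ ≤ _ := by rw [mul_comm]; exact this

theorem stmt_13 {Ω : Type*} [MeasurableSpace Ω] (μ : Measure Ω) [IsProbabilityMeasure μ]
    (E : ℕ → Set Ω) (hE : ∀ n, MeasurableSet (E n))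
    (hdiv : Tendsto (fun N => ∑ n ∈ Finset.range N, (μ (E n)).toReal) atTop atTop) :
    limsup (fun N =>
        (∑ n ∈ Finset.range N, ∑ m ∈ Finset.range N, (μ (E n)).toReal * (μ (E m)).toReal) /
        (∑ n ∈ Finset.range N, ∑ m ∈ Finset.range N, (μ (E n ∩ E m)).toReal)) atTop ≤
      (μ (limsup E atTop)).toReal := by
  set p : ℕ → ℝ := fun n => (μ (E n)).toReal with hp
  set q : ℕ → ℕ → ℝ := fun n m => (μ (E n ∩ E m)).toReal with hq
  have hp0 : ∀ n, 0 ≤ p n := fun n => ENNReal.toReal_nonneg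
  have hq0 : ∀ n m, 0 ≤ q n m := fun n m => ENNReal.toReal_nonneg
  set S : ℕ → ℝ := fun N => ∑ n ∈ Finset.range N, p n with hS
  set r : ℕ → ℝ := fun N =>
    (∑ n ∈ Finset.range N, ∑ m ∈ Finset.range N, p n * p m) /
    (∑ n ∈ Finset.range N, ∑ m ∈ Finset.range N, q n m) with hr
  have hrnum : ∀ N, (∑ n ∈ Finset.range N, ∑ m ∈ Finset.range N, p n * p m) = S N ^ 2 := by
    intro N
    rw [hS, sq, Finset.sum_mul_sum]
  have hr0 : ∀ N, 0 ≤ r N := by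
    intro N
    apply div_nonneg
    · rw [hrnum]; positivity
    · exact Finset.sum_nonneg fun n _ => Finset.sum_nonneg fun m _ => hq0 n m
  -- the tail unions
  set U : ℕ → Set Ω := fun k => ⋃ n, ⋃ (_ : k ≤ n), E n with hU
  set m : ℕ → ℝ := fun k => (μ (U k)).toReal with hm
  have hm0 : ∀ k, 0 ≤ m k := fun k => ENNReal.toReal_nonneg
  -- Step 1: m tends to the measure of the limsup
  have hlimsup : limsup E atTop = ⋂ k, U k := by
    rw [limsup_eq_iInf_iSup_of_nat]
    simp only [hU, Set.iSup_eq_iUnion, Set.iInf_eq_iInter, ge_iff_le]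
  have hT : Tendsto m atTop (𝓝 ((μ (limsup E atTop)).toReal)) := by
    rw [hlimsup]
    have h1 : Tendsto (fun k => μ (U k)) atTop (𝓝 (μ (⋂ k, U k))) := by
      apply tendsto_measure_iInter_atTop
      · intro k
        exact (MeasurableSet.iUnion fun n => MeasurableSet.iUnion fun _ => hE n).nullMeasurableSet
      · intro a b hab
        exact Set.iUnion₂_mono' fun n hn => ⟨n, le_trans hab hn, le_rfl⟩
      · exact ⟨0, measure_ne_top μ _⟩
    exact (ENNReal.tendsto_toReal (measure_ne_top μ _)).comp h1
  -- Step 2: for each k, limsup r ≤ m k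
  have key : ∀ k, limsup r atTop ≤ m k := by
    intro k
    set C : ℝ := S k with hC
    have hC0 : 0 ≤ C := Finset.sum_nonneg fun n _ => hp0 n
    -- eventual bound
    have hev : ∀ᶠ N in atTop, r N ≤ m k + 2 * C / S N := by
      have h1 : ∀ᶠ N in atTop, C + 1 ≤ S N := hdiv.eventually_ge_atTop (C + 1)
      filter_upwards [h1, eventually_ge_atTop k] with N hSN hkN
      set S' : ℝ := ∑ n ∈ Finset.Ico k N, p n with hS'
      set D : ℝ := ∑ n ∈ Finset.range N, ∑ mm ∈ Finset.range N, q n mm with hD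
      set D' : ℝ := ∑ n ∈ Finset.Ico k N, ∑ mm ∈ Finset.Ico k N, q n mm with hD'
      have hSC : S N = C + S' := by
        simp only [hS', hC, hS]
        exact (Finset.sum_range_add_sum_Ico p hkN).symm
      have hS'1 : 1 ≤ S' := by linarith
      have hS'D' : S' ≤ D' := by
        rw [hS', hD']
        apply Finset.sum_le_sum
        intro n hn
        have : q n n ≤ ∑ mm ∈ Finset.Ico k N, q n mm :=
          Finset.single_le_sum (fun mm _ => hq0 n mm) hn
        have hqnn : q n n = p n := by rw [hq, hp]; simp [Set.inter_self]
        linarith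
      have hD'pos : 0 < D' := lt_of_lt_of_le (by linarith) hS'D'
      have hsub : Finset.Ico k N ⊆ Finset.range N := by
        rw [Finset.range_eq_Ico]
        exact Finset.Ico_subset_Ico (Nat.zero_le k) le_rfl
      have hD'D : D' ≤ D := by
        rw [hD, hD']
        apply le_trans (Finset.sum_le_sum_of_subset_of_nonneg hsub ?_)
        · apply Finset.sum_le_sum
          intro n _
          exact Finset.sum_le_sum_of_subset_of_nonneg hsub (fun mm _ _ => hq0 n mm)
        · intro n _ _
          exact Finset.sum_nonneg fun mm _ => hq0 n mm
      have hSpos : 0 < S N := by linarith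
      -- Cauchy-Schwarz bounds
      have hcs1 : S N ^ 2 ≤ D := by
        have := kochen_cs μ E hE (Finset.range N)
        have hle1 : (μ (⋃ n ∈ Finset.range N, E n)).toReal ≤ 1 := by
          rw [← ENNReal.toReal_one]
          exact ENNReal.toReal_mono (by simp) prob_le_one
        have hDnn : (0:ℝ) ≤ D :=
          Finset.sum_nonneg fun n _ => Finset.sum_nonneg fun mm _ => hq0 n mm
        calc S N ^ 2 ≤ (μ (⋃ n ∈ Finset.range N, E n)).toReal * D := this
          _ ≤ 1 * D := by apply mul_le_mul_of_nonneg_right hle1 hDnn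
          _ = D := one_mul D
      have hcs2 : S' ^ 2 ≤ m k * D' := by
        have h := kochen_cs μ E hE (Finset.Ico k N)
        have hsub2 : (⋃ n ∈ Finset.Ico k N, E n) ⊆ U k := by
          intro x hx
          rcases Set.mem_iUnion₂.1 hx with ⟨n, hn, hxn⟩
          exact Set.mem_iUnion₂.2 ⟨n, (Finset.mem_Ico.1 hn).1, hxn⟩
        have : (μ (⋃ n ∈ Finset.Ico k N, E n)).toReal ≤ m k :=
          ENNReal.toReal_mono (measure_ne_top μ _) (measure_mono hsub2)
        calc S' ^ 2 ≤ (μ (⋃ n ∈ Finset.Ico k N, E n)).toReal * D' := h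
          _ ≤ m k * D' := mul_le_mul_of_nonneg_right this (le_of_lt hD'pos)
      have h1' : S' ^ 2 / D' ≤ m k := (div_le_iff₀ hD'pos).2 (by linarith [hcs2])
      -- arithmetic
      have e1 : r N = S N ^ 2 / D := by
        simp only [hr]
        rw [hrnum, hD]
      have hDpos : 0 < D := lt_of_lt_of_le hD'pos hD'D
      have hnum : S N ^ 2 ≤ S' ^ 2 + 2 * C * S N := by nlinarith
      have h2CS : 0 ≤ 2 * C * S N := by positivity
      have hS2pos : 0 < S N ^ 2 := by positivity
      have eA : S N ^ 2 / D ≤ (S' ^ 2 + 2 * C * S N) / D := by gcongr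
      have eB : (S' ^ 2 + 2 * C * S N) / D = S' ^ 2 / D + (2 * C * S N) / D := add_div _ _ _
      have eC : S' ^ 2 / D ≤ S' ^ 2 / D' :=
        div_le_div_of_nonneg_left (by positivity) hD'pos hD'D
      have eD : (2 * C * S N) / D ≤ (2 * C * S N) / S N ^ 2 :=
        div_le_div_of_nonneg_left h2CS hS2pos hcs1
      have e6 : (2 * C * S N) / S N ^ 2 = 2 * C / S N := by
        rw [sq, mul_div_mul_right _ _ (ne_of_gt hSpos)]
      rw [e1]
      linarith
    -- from the eventual bound, conclude
    have hc : Tendsto (fun N => m k + 2 * C / S N) atTop (𝓝 (m k + 0)) := by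
      apply Tendsto.add tendsto_const_nhds
      exact Tendsto.div_atTop tendsto_const_nhds hdiv
    have hlim : limsup (fun N => m k + 2 * C / S N) atTop = m k := by
      rw [hc.limsup_eq]; ring
    calc limsup r atTop ≤ limsup (fun N => m k + 2 * C / S N) atTop := by
          exact limsup_le_limsup hev
            (isCoboundedUnder_le_of_eventually_le atTop (Eventually.of_forall hr0))
            hc.isBoundedUnder_le
      _ = m k := hlim
  exact ge_of_tendsto' hT key
end

section
/- Let h ≥ 2 and b_1, …, b_h positive integers. For any A ⊆ ℤ_{≥0}, the representation count r_{A,h}(n) (number of (k_1,…,k_h) ∈ A^h with Σ b_i k_i = n) decomposes as r_{A,h}(n) = ρ_{A,h}(n) + Σ over a finite list of coefficient tuples (c_1,…,c_t) with t < h and max c_i ≤ b_1 + ⋯ + b_h of ρ^{(c_1,…,c_t)}_{A,t}(n), where ρ counts solutions with pairwise distinct coordinates (exact solutions). In particular, every non-exact solution of the original equation corresponds bijectively to an exact solution of an equation of strictly smaller length obtained by merging equal coordinates and summing their coefficients. -/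
open Finset

/-- least index with the same value -/
def patt {α : Type*} [DecidableEq α] {h : ℕ} (k : Fin h → α) : Fin h → Fin h :=
  fun i => (Finset.univ.filter (fun j => k j = k i)).min' ⟨i, by simp⟩

lemma patt_spec {α : Type*} [DecidableEq α] {h : ℕ} (k : Fin h → α) (i : Fin h) :
    k (patt k i) = k i := by
  have := Finset.min'_mem (Finset.univ.filter (fun j => k j = k i)) ⟨i, by simp⟩
  simpa [patt] using this

lemma patt_eq_iff {α : Type*} [DecidableEq α] {h : ℕ} (k : Fin h → α) (i j : Fin h) :
    patt k i = patt k j ↔ k i = k j := by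
  constructor
  · intro hp
    rw [← patt_spec k i, hp, patt_spec k j]
  · intro hk
    unfold patt
    congr 1
    ext x
    simp [hk]

lemma patt_congr {α β : Type*} [DecidableEq α] [DecidableEq β] {h : ℕ}
    (k : Fin h → α) (m : Fin h → β) (H : ∀ i j, k i = k j ↔ m i = m j) :
    patt k = patt m := by
  funext i
  unfold patt
  congr 1
  ext x
  simp [H]

lemma patt_patt {α : Type*} [DecidableEq α] {h : ℕ} (k : Fin h → α) :
    patt (patt k) = patt k :=
  patt_congr _ _ (fun i j => patt_eq_iff k i j)

lemma patt_eq_id_iff {α : Type*} [DecidableEq α] {h : ℕ} (k : Fin h → α) :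
    patt k = id ↔ Function.Injective k := by
  constructor
  · intro hp i j hk
    have := (patt_eq_iff k i j).2 hk
    rw [hp] at this
    simpa using this
  · intro hk
    funext i
    exact hk (patt_spec k i)

lemma patt_fix {α : Type*} [DecidableEq α] {h : ℕ} (k : Fin h → α) (i : Fin h) :
    patt k (patt k i) = patt k i :=
  (patt_eq_iff k _ i).2 (patt_spec k i)

section merged

variable {h : ℕ} (p : Fin h → Fin h)

def fixedSet : Finset (Fin h) := Finset.univ.filter fun i => p i = i

noncomputable def fe : Fin (fixedSet p).card ≃o (fixedSet p) := (fixedSet p).orderIsoOfFin rfl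

lemma fixed_of_mem {h : ℕ} {p : Fin h → Fin h} {x : Fin h} (hx : x ∈ fixedSet p) :
    p x = x := (Finset.mem_filter.1 hx).2

lemma mem_fixedSet (hfix : ∀ i, p (p i) = p i) (i : Fin h) : p i ∈ fixedSet p := by
  simp [fixedSet, hfix i]

noncomputable def idx (hfix : ∀ i, p (p i) = p i) (i : Fin h) : Fin (fixedSet p).card :=
  (fe p).symm ⟨p i, mem_fixedSet p hfix i⟩

lemma fe_idx (hfix : ∀ i, p (p i) = p i) (i : Fin h) :
    ((fe p) (idx p hfix i) : Fin h) = p i := by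
  simp [idx]

lemma idx_fe (hfix : ∀ i, p (p i) = p i) (j : Fin (fixedSet p).card) :
    idx p hfix ((fe p) j : Fin h) = j := by
  have hmem : ((fe p) j : Fin h) ∈ fixedSet p := ((fe p) j).2
  have hfj : p ((fe p) j : Fin h) = ((fe p) j : Fin h) := fixed_of_mem hmem
  unfold idx
  rw [show (⟨p ((fe p) j : Fin h), mem_fixedSet p hfix _⟩ : (fixedSet p)) = (fe p) j from
    Subtype.ext hfj]
  simp

noncomputable def mc (b : Fin h → ℕ) (j : Fin (fixedSet p).card) : ℕ :=
  ∑ i ∈ Finset.univ.filter (fun i => p i = ((fe p) j : Fin h)), b i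

lemma main_sum (hfix : ∀ i, p (p i) = p i) (b : Fin h → ℕ) (k : Fin h → ℕ)
    (hk : ∀ i, k i = k (p i)) :
    ∑ i, b i * k i = ∑ j, mc p b j * k ((fe p) j : Fin h) := by
  have step1 : ∀ j, mc p b j * k ((fe p) j : Fin h)
      = ∑ i ∈ Finset.univ.filter (fun i => p i = ((fe p) j : Fin h)), b i * k i := by
    intro j
    rw [mc, Finset.sum_mul]
    apply Finset.sum_congr rfl
    intro i hi
    simp only [Finset.mem_filter] at hi
    rw [hk i, hi.2]
  simp_rw [step1]
  have step2 : ∑ j, ∑ i ∈ Finset.univ.filter (fun i => p i = ((fe p) j : Fin h)), b i * k i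
      = ∑ x : (fixedSet p), ∑ i ∈ Finset.univ.filter (fun i => p i = (x : Fin h)), b i * k i :=
    Fintype.sum_equiv (fe p).toEquiv _ _ (fun j => rfl)
  rw [step2, Finset.sum_coe_sort (fixedSet p)
    (fun x => ∑ i ∈ Finset.univ.filter (fun i => p i = x), b i * k i),
    Finset.sum_fiberwise_of_maps_to (fun i _ => mem_fixedSet p hfix i)]

lemma fiber_card (b : Fin h → ℕ) (hp : patt p = p) (A : Set ℕ) (n : ℕ) :
    Nat.card {k : Fin h → ℕ // (∀ i, k i ∈ A) ∧ (∑ i, b i * k i = n) ∧ patt k = p} =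
    Nat.card {k : Fin (fixedSet p).card → ℕ //
      (∀ i, k i ∈ A) ∧ (∑ i, mc p b i * k i = n) ∧ Function.Injective k} := by
  have hfix : ∀ i, p (p i) = p i := by
    intro i
    have := patt_fix p i
    rwa [hp] at this
  apply Nat.card_congr
  refine ⟨fun x => ⟨fun j => x.1 ((fe p) j : Fin h), ?_⟩,
          fun y => ⟨fun i => y.1 (idx p hfix i), ?_⟩, ?_, ?_⟩
  · obtain ⟨k, hA, hs, hpk⟩ := x
    have hkp : ∀ i, k i = k (p i) := by
      intro i
      conv_rhs => rw [← hpk]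
      exact (patt_spec k i).symm
    refine ⟨fun j => hA _, ?_, ?_⟩
    · rw [← main_sum p hfix b k hkp]; exact hs
    · intro j1 j2 hkj
      have : patt k ((fe p) j1 : Fin h) = patt k ((fe p) j2 : Fin h) :=
        (patt_eq_iff k _ _).2 hkj
      rw [hpk] at this
      have h1 : p ((fe p) j1 : Fin h) = ((fe p) j1 : Fin h) := fixed_of_mem ((fe p) j1).2
      have h2 : p ((fe p) j2 : Fin h) = ((fe p) j2 : Fin h) := fixed_of_mem ((fe p) j2).2
      rw [h1, h2] at this
      exact (fe p).injective (Subtype.ext this)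
  · obtain ⟨k', hA, hs, hinj⟩ := y
    have hker : ∀ i j, k' (idx p hfix i) = k' (idx p hfix j) ↔ p i = p j := by
      intro i j
      constructor
      · intro hk
        have := hinj hk
        have := congrArg (fun z => ((fe p) z : Fin h)) this
        simpa [fe_idx p hfix] using this
      · intro hpij
        have : idx p hfix i = idx p hfix j := by
          unfold idx
          congr 1
          exact Subtype.ext hpij
        rw [this]
    have hkp : ∀ i, k' (idx p hfix i) = k' (idx p hfix (p i)) := by
      intro i
      rw [(hker i (p i)).2 (hfix i).symm]
    refine ⟨fun i => hA _, ?_, ?_⟩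
    · rw [main_sum p hfix b _ hkp]
      have : ∀ j, k' (idx p hfix ((fe p) j : Fin h)) = k' j := by
        intro j; rw [idx_fe p hfix j]
      simp_rw [this]
      exact hs
    · exact patt_congr _ p (fun i j => (hker i j).trans
        (by rw [← patt_eq_iff p i j, hp])) |>.trans hp
  · intro x
    obtain ⟨k, hA, hs, hpk⟩ := x
    apply Subtype.ext
    funext i
    show k ((fe p) (idx p hfix i) : Fin h) = k i
    rw [fe_idx p hfix i]
    conv_lhs => rw [← hpk]
    exact patt_spec k i
  · intro y
    obtain ⟨k', hA, hs, hinj⟩ := y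
    apply Subtype.ext
    funext j
    show k' (idx p hfix ((fe p) j : Fin h)) = k' j
    rw [idx_fe p hfix j]

end merged

lemma fin_sol {m : ℕ} (c : Fin m → ℕ) (hc : ∀ i, 1 ≤ c i) (n : ℕ) :
    {k : Fin m → ℕ | ∑ i, c i * k i = n}.Finite := by
  apply Set.Finite.subset (Set.Finite.pi (fun i : Fin m => Set.finite_Icc 0 n))
  intro k hk
  simp only [Set.mem_setOf_eq] at hk
  simp only [Set.mem_pi, Set.mem_univ, forall_true_left, Set.mem_Icc]
  intro i
  refine ⟨Nat.zero_le _, ?_⟩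
  calc k i ≤ c i * k i := Nat.le_mul_of_pos_left _ (hc i)
    _ ≤ ∑ j, c j * k j := Finset.single_le_sum (f := fun j => c j * k j) (fun j _ => Nat.zero_le _) (Finset.mem_univ i)
    _ = n := hk

lemma toList_map_sum {α : Type*} (s : Finset α) (f : α → ℕ) :
    (s.toList.map f).sum = ∑ x ∈ s, f x := by
  have h1 : ((s.toList.map f : List ℕ) : Multiset ℕ) = Multiset.map f s.1 := by
    rw [← Multiset.map_coe, Finset.coe_toList]
  calc (s.toList.map f).sum = ((s.toList.map f : List ℕ) : Multiset ℕ).sum := rfl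
    _ = (Multiset.map f s.1).sum := by rw [h1]
    _ = ∑ x ∈ s, f x := rfl

lemma fin_sub {m : ℕ} (c : Fin m → ℕ) (hc : ∀ i, 1 ≤ c i) (n : ℕ)
    (P : (Fin m → ℕ) → Prop) (hP : ∀ k, P k → ∑ i, c i * k i = n) :
    Finite {k : Fin m → ℕ // P k} := by
  have : {k : Fin m → ℕ | P k}.Finite :=
    (fin_sol c hc n).subset (fun k hk => hP k hk)
  exact this.to_subtype

theorem stmt_17 (h : ℕ) (hh : 2 ≤ h) (b : Fin h → ℕ) (hb : ∀ i, 1 ≤ b i) :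
    ∃ L : List (Σ t : ℕ, Fin t → ℕ),
      (∀ p ∈ L, p.1 < h ∧ ∀ i, 1 ≤ p.2 i ∧ p.2 i ≤ ∑ j, b j) ∧
      ∀ (A : Set ℕ) (n : ℕ),
        Nat.card {k : Fin h → ℕ // (∀ i, k i ∈ A) ∧ ∑ i, b i * k i = n} =
          Nat.card {k : Fin h → ℕ //
            (∀ i, k i ∈ A) ∧ (∑ i, b i * k i = n) ∧ Function.Injective k} +
          (L.map (fun p => Nat.card {k : Fin p.1 → ℕ //
            (∀ i, k i ∈ A) ∧ (∑ i, p.2 i * k i = n) ∧ Function.Injective k})).sum := by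
  classical
  set V : Finset (Fin h → Fin h) :=
    Finset.univ.filter (fun p => patt p = p ∧ p ≠ id) with hV
  refine ⟨V.toList.map (fun p => ⟨(fixedSet p).card, mc p b⟩), ?_, ?_⟩
  · intro q hq
    simp only [List.mem_map, Finset.mem_toList] at hq
    obtain ⟨p, hpV, rfl⟩ := hq
    rw [hV, Finset.mem_filter] at hpV
    obtain ⟨-, hp, hpid⟩ := hpV
    constructor
    · have hss : fixedSet p ⊂ Finset.univ := by
        rw [Finset.ssubset_univ_iff]
        intro hEq
        apply hpid
        funext i
        exact fixed_of_mem (hEq ▸ Finset.mem_univ i)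
      have := Finset.card_lt_card hss
      simpa using this
    · intro j
      constructor
      · have hmem : ((fe p) j : Fin h) ∈
            Finset.univ.filter (fun i => p i = ((fe p) j : Fin h)) := by
          simp [fixed_of_mem ((fe p) j).2]
        calc 1 ≤ b ((fe p) j : Fin h) := hb _
          _ ≤ mc p b j := by
            unfold mc
            exact Finset.single_le_sum (f := b) (fun i _ => Nat.zero_le _) hmem
      · unfold mc
        exact Finset.sum_le_sum_of_subset (f := b)
          (Finset.filter_subset (fun i => p i = ((fe p) j : Fin h)) Finset.univ)
  · intro A n
    haveI FT : ∀ p : Fin h → Fin h, Fintype {k : Fin h → ℕ //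
        (∀ i, k i ∈ A) ∧ (∑ i, b i * k i = n) ∧ patt k = p} := fun p =>
      @Fintype.ofFinite _ (fin_sub b hb n _ (fun k hk => hk.2.1))
    have key : Nat.card {k : Fin h → ℕ // (∀ i, k i ∈ A) ∧ ∑ i, b i * k i = n} =
        ∑ p : Fin h → Fin h, Nat.card {k : Fin h → ℕ //
          (∀ i, k i ∈ A) ∧ (∑ i, b i * k i = n) ∧ patt k = p} := by
      have E : {k : Fin h → ℕ // (∀ i, k i ∈ A) ∧ ∑ i, b i * k i = n} ≃
          Σ p : Fin h → Fin h, {k : Fin h → ℕ //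
            (∀ i, k i ∈ A) ∧ (∑ i, b i * k i = n) ∧ patt k = p} :=
        ⟨fun x => ⟨patt x.1, x.1, x.2.1, x.2.2, rfl⟩,
         fun y => ⟨y.2.1, y.2.2.1, y.2.2.2.1⟩,
         fun x => rfl,
         fun y => by
          obtain ⟨p, k, h1, h2, h3⟩ := y
          subst h3
          rfl⟩
      rw [Nat.card_congr E, Nat.card_eq_fintype_card, Fintype.card_sigma]
      exact Finset.sum_congr rfl (fun p _ => (Nat.card_eq_fintype_card).symm)
    rw [key, ← Finset.add_sum_erase _ _ (Finset.mem_univ id)]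
    congr 1
    · exact Nat.card_congr (Equiv.subtypeEquivRight (fun k =>
        and_congr_right fun _ => and_congr_right fun _ => patt_eq_id_iff k))
    · have hsub : V ⊆ Finset.univ.erase id := by
        intro p hp
        rw [hV, Finset.mem_filter] at hp
        exact Finset.mem_erase.2 ⟨hp.2.2, Finset.mem_univ _⟩
      have hzero : ∀ p ∈ Finset.univ.erase id, p ∉ V →
          Nat.card {k : Fin h → ℕ //
            (∀ i, k i ∈ A) ∧ (∑ i, b i * k i = n) ∧ patt k = p} = 0 := by
        intro p hpe hpV
        have hE : IsEmpty {k : Fin h → ℕ //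
            (∀ i, k i ∈ A) ∧ (∑ i, b i * k i = n) ∧ patt k = p} := by
          constructor
          intro x
          apply hpV
          rw [hV, Finset.mem_filter]
          refine ⟨Finset.mem_univ _, ?_, (Finset.mem_erase.1 hpe).1⟩
          rw [← x.2.2.2, patt_patt]
        exact Nat.card_of_isEmpty
      rw [← Finset.sum_subset hsub hzero, List.map_map, toList_map_sum]
      exact Finset.sum_congr rfl (fun p hp => by
        rw [hV, Finset.mem_filter] at hp
        exact fiber_card p b hp.2.1 A n)
end
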